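/- arXiv:cs/0606052 — 6 statements merged into one kernel-verified Lean document; each statement's English description precedes it below -/
import Mathlib

section
/- Let G be a connected simple graph on N ≥ 2 vertices with Laplacian L, let α* = 2/(λ₂(L) + λ_N(L)), W = I − α*L, and γ₂ = (λ_N(L) − λ₂(L))/(λ_N(L) + λ₂(L)). For any initial vector x₀ ∈ ℝ^N, define x_i = W^i x₀ and x̄ = ((1/N)·Σ_{j=1}^N (x₀)_j)·𝟙, where 𝟙 is the all-ones vector. Then for every i ≥ 0, ‖x_i − x̄‖ ≤ γ₂^i · ‖x₀ − x̄‖ (Euclidean norm). Moreover γ₂ = (1 − γ)/(1 + γ) where γ = λ₂(L)/λ_N(L). -/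
open Matrix in
lemma stmt0_step (N : ℕ) (hN : 2 ≤ N) (G : SimpleGraph (Fin N)) [DecidableRel G.Adj]
    (hconn : G.Connected) (l2 lN α γ₂ : ℝ)
    (hl2 : IsLeast {x : ℝ | x ∈ spectrum ℝ (G.lapMatrix ℝ) ∧ x ≠ 0} l2)
    (hlN : IsGreatest (spectrum ℝ (G.lapMatrix ℝ)) lN)
    (hl2pos : 0 < l2) (hle : l2 ≤ lN)
    (hα : α = 2 / (l2 + lN)) (hγ₂ : γ₂ = (lN - l2) / (lN + l2))
    (W : Matrix (Fin N) (Fin N) ℝ) (hW : W = 1 - α • G.lapMatrix ℝ)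
    (v : Fin N → ℝ) (hv : ∑ j, v j = 0) :
    Real.sqrt (∑ j, (W *ᵥ v) j ^ 2) ≤ γ₂ * Real.sqrt (∑ j, v j ^ 2) := by
  have hH : (G.lapMatrix ℝ).IsHermitian := (SimpleGraph.posSemidef_lapMatrix ℝ G).1
  set b := hH.eigenvectorBasis with hb
  set μ := hH.eigenvalues with hμ
  have hγnn : 0 ≤ γ₂ := by rw [hγ₂]; apply div_nonneg <;> linarith
  have parseval : ∀ x : EuclideanSpace ℝ (Fin N),
      ∑ i, x i ^ 2 = ∑ k, (b.repr x k) ^ 2 := by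
    intro x
    have h1 : ‖b.repr x‖ = ‖x‖ := b.repr.norm_map x
    rw [EuclideanSpace.norm_eq, EuclideanSpace.norm_eq] at h1
    have h2 : ∀ y : EuclideanSpace ℝ (Fin N),
        Real.sqrt (∑ i, ‖y i‖ ^ 2) = Real.sqrt (∑ i, y i ^ 2) := by
      intro y; congr 1; exact Finset.sum_congr rfl fun i _ => by rw [Real.norm_eq_abs, sq_abs]
    rw [h2, h2] at h1
    exact ((Real.sqrt_inj (by positivity) (by positivity)).1 h1).symm
  set c : Fin N → ℝ := fun j => b.repr (WithLp.toLp 2 v) j with hc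
  have hWu : ∀ j, W *ᵥ (b j : Fin N → ℝ) = (1 - α * μ j) • (b j : Fin N → ℝ) := by
    intro j
    rw [hW, sub_mulVec, one_mulVec, smul_mulVec,
      show G.lapMatrix ℝ *ᵥ (b j : Fin N → ℝ) = μ j • (b j : Fin N → ℝ) from
        hH.mulVec_eigenvectorBasis j]
    ext k
    simp [smul_smul]
    ring
  have hdecomp : WithLp.toLp 2 (W *ᵥ v) = ∑ j, ((1 - α * μ j) * c j) • b j := by
    have h1 : WithLp.toLp 2 v = ∑ j, c j • b j := (b.sum_repr (WithLp.toLp 2 v)).symm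
    calc WithLp.toLp 2 (W *ᵥ v) = Matrix.toEuclideanLin W (WithLp.toLp 2 v) := rfl
    _ = Matrix.toEuclideanLin W (∑ j, c j • b j) := by
        exact congrArg _ h1
    _ = ∑ j, c j • Matrix.toEuclideanLin W (b j) := by
        rw [map_sum]
        exact Finset.sum_congr rfl fun j _ => (Matrix.toEuclideanLin W).map_smul _ _
    _ = ∑ j, ((1 - α * μ j) * c j) • b j := by
        refine Finset.sum_congr rfl fun j _ => ?_
        have h2 : Matrix.toEuclideanLin W (b j) = (1 - α * μ j) • b j :=
          congrArg (WithLp.toLp 2) (hWu j)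
        rw [h2, smul_smul, mul_comm]
  have hrepr : ∀ k, b.repr (WithLp.toLp 2 (W *ᵥ v)) k = (1 - α * μ k) * c k := by
    intro k
    rw [hdecomp, map_sum]
    simp only [_root_.map_smul, OrthonormalBasis.repr_self]
    rw [WithLp.ofLp_sum, Finset.sum_apply]
    simp [EuclideanSpace.single_apply]
  have hbound : ∀ k, ((1 - α * μ k) * c k) ^ 2 ≤ γ₂ ^ 2 * c k ^ 2 := by
    intro k
    by_cases hck : c k = 0
    · simp [hck]
    · have hμne : μ k ≠ 0 := by
        intro hμ0
        apply hck
        have h0 : Matrix.toLin' (G.lapMatrix ℝ) (b k) = 0 := by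
          rw [Matrix.toLin'_apply,
            show G.lapMatrix ℝ *ᵥ (b k : Fin N → ℝ) = μ k • (b k : Fin N → ℝ) from
              hH.mulVec_eigenvectorBasis k, hμ0]
          simp
        have hconst : ∀ i j : Fin N, (b k) i = (b k) j := fun i j =>
          (G.lapMatrix_mulVec_eq_zero_iff_forall_reachable (x := (b k : Fin N → ℝ))).1 h0 i j
            (hconn.preconnected i j)
        have i0 : Fin N := ⟨0, by omega⟩
        have hck2 : c k = ∑ i, (b k) i * v i := by
          rw [hc]
          simp only [OrthonormalBasis.repr_apply_apply, PiLp.inner_apply, RCLike.inner_apply,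
            starRingEnd_apply, star_trivial]
          exact Finset.sum_congr rfl fun i _ => mul_comm _ _
        rw [hck2]
        calc ∑ i, (b k) i * v i = ∑ i, (b k) i0 * v i :=
              Finset.sum_congr rfl fun i _ => by rw [hconst i i0]
        _ = (b k) i0 * ∑ i, v i := by rw [Finset.mul_sum]
        _ = 0 := by rw [hv, mul_zero]
      have hmem : μ k ∈ spectrum ℝ (G.lapMatrix ℝ) := hH.eigenvalues_mem_spectrum_real k
      have hge : l2 ≤ μ k := hl2.2 ⟨hmem, hμne⟩
      have hle2 : μ k ≤ lN := hlN.2 hmem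
      have hs : (0:ℝ) < l2 + lN := by linarith
      have e1 : 1 - α * μ k = (l2 + lN - 2 * μ k) / (l2 + lN) := by
        rw [hα]; field_simp
      have e2 : (l2 + lN - 2 * μ k) ^ 2 ≤ (lN - l2) ^ 2 := by nlinarith
      have e3 : (1 - α * μ k) ^ 2 ≤ γ₂ ^ 2 := by
        rw [e1, hγ₂, div_pow, div_pow, add_comm lN l2]
        exact div_le_div_of_nonneg_right e2 (by positivity) |>.trans_eq rfl
      calc ((1 - α * μ k) * c k) ^ 2 = (1 - α * μ k) ^ 2 * c k ^ 2 := by ring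
      _ ≤ γ₂ ^ 2 * c k ^ 2 := mul_le_mul_of_nonneg_right e3 (sq_nonneg _)
  calc Real.sqrt (∑ j, (W *ᵥ v) j ^ 2)
      = Real.sqrt (∑ k, (b.repr (WithLp.toLp 2 (W *ᵥ v)) k) ^ 2) := by
        exact congrArg Real.sqrt (parseval (WithLp.toLp 2 (W *ᵥ v)))
  _ = Real.sqrt (∑ k, ((1 - α * μ k) * c k) ^ 2) := by
      congr 1; exact Finset.sum_congr rfl fun k _ => by rw [hrepr k]
  _ ≤ Real.sqrt (∑ k, γ₂ ^ 2 * c k ^ 2) :=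
      Real.sqrt_le_sqrt (Finset.sum_le_sum fun k _ => hbound k)
  _ = Real.sqrt (γ₂ ^ 2 * ∑ k, c k ^ 2) := by rw [Finset.mul_sum]
  _ = γ₂ * Real.sqrt (∑ k, c k ^ 2) := by
      rw [Real.sqrt_mul (by positivity), Real.sqrt_sq hγnn]
  _ = γ₂ * Real.sqrt (∑ j, v j ^ 2) := by rw [← parseval (WithLp.toLp 2 v)]

open Matrix

/-- Convergence rate of the equal-weight average-consensus iteration:
for a connected simple graph on `N ≥ 2` vertices with Laplacian `L`, weight
`α* = 2/(λ₂ + λ_N)`, `W = I - α* L` and `γ₂ = (λ_N - λ₂)/(λ_N + λ₂)`, the iterates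
`x_i = W^i x₀` satisfy `‖x_i - x̄‖ ≤ γ₂^i ‖x₀ - x̄‖` in the Euclidean norm, where
`x̄` is the vector all of whose entries are the average of the entries of `x₀`;
moreover `γ₂ = (1 - γ)/(1 + γ)` with `γ = λ₂/λ_N`.  (For a connected graph, the
second smallest Laplacian eigenvalue `λ₂` is the least nonzero element of the
spectrum, and `λ_N` is the greatest element of the spectrum.) -/
theorem stmt0 (N : ℕ) (hN : 2 ≤ N) (G : SimpleGraph (Fin N)) [DecidableRel G.Adj]
    (hconn : G.Connected) (l2 lN : ℝ)
    (hl2 : IsLeast {x : ℝ | x ∈ spectrum ℝ (G.lapMatrix ℝ) ∧ x ≠ 0} l2)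
    (hlN : IsGreatest (spectrum ℝ (G.lapMatrix ℝ)) lN)
    (α γ₂ : ℝ) (hα : α = 2 / (l2 + lN)) (hγ₂ : γ₂ = (lN - l2) / (lN + l2))
    (W : Matrix (Fin N) (Fin N) ℝ) (hW : W = 1 - α • G.lapMatrix ℝ)
    (x0 xbar : Fin N → ℝ)
    (hxbar : xbar = fun _ => (1 / (N : ℝ)) * ∑ j, x0 j) :
    (∀ i : ℕ,
      Real.sqrt (∑ j, ((W ^ i).mulVec x0 j - xbar j) ^ 2)
        ≤ γ₂ ^ i * Real.sqrt (∑ j, (x0 j - xbar j) ^ 2)) ∧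
    γ₂ = (1 - l2 / lN) / (1 + l2 / lN) := by
  have hPSD := SimpleGraph.posSemidef_lapMatrix ℝ G
  -- l2 > 0
  have hl2pos : 0 < l2 := by
    obtain ⟨hmem, hne⟩ := hl2.1
    have hev : Module.End.HasEigenvalue (Matrix.toEuclideanLin (G.lapMatrix ℝ)) l2 := by
      apply Module.End.HasEigenvalue.of_mem_spectrum
      rw [Matrix.spectrum_toEuclideanLin]
      exact hmem
    obtain ⟨w, hw⟩ := hev.exists_hasEigenvector
    have h1 : G.lapMatrix ℝ *ᵥ (w : Fin N → ℝ) = l2 • (w : Fin N → ℝ) := congrArg WithLp.ofLp hw.apply_eq_smul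
    have h2 : (0:ℝ) ≤ l2 * ∑ i, w i ^ 2 := by
      have h3 := hPSD.dotProduct_mulVec_nonneg (w : Fin N → ℝ)
      rw [star_trivial, h1] at h3
      have h4 : (w : Fin N → ℝ) ⬝ᵥ l2 • (w : Fin N → ℝ) = l2 * ∑ i, w i ^ 2 := by
        have e : ∀ i, (l2 • (w : Fin N → ℝ)) i = l2 * w i := fun i => rfl
        simp only [dotProduct, e, Finset.mul_sum]
        exact Finset.sum_congr rfl fun i _ => by ring
      rw [h4] at h3
      exact h3
    have h5 : 0 < ∑ i, w i ^ 2 := by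
      have hwne : (w : Fin N → ℝ) ≠ 0 := (WithLp.ofLp_injective 2).ne hw.2
      obtain ⟨i, hi⟩ := Function.ne_iff.1 hwne
      exact Finset.sum_pos' (fun i _ => sq_nonneg _)
        ⟨i, Finset.mem_univ i, sq_pos_of_ne_zero hi⟩
    have h6 : 0 ≤ l2 := by
      by_contra h
      push_neg at h
      nlinarith
    exact lt_of_le_of_ne h6 (Ne.symm hne)
  have hle : l2 ≤ lN := hlN.2 hl2.1.1
  have hWone : W *ᵥ (fun _ => (1:ℝ)) = fun _ => (1:ℝ) := by
    rw [hW, Matrix.sub_mulVec, Matrix.one_mulVec, Matrix.smul_mulVec,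
      G.lapMatrix_mulVec_const_eq_zero, smul_zero, sub_zero]
  have hWsymm : Wᵀ = W := by
    rw [hW, Matrix.transpose_sub, Matrix.transpose_one, Matrix.transpose_smul,
      (G.isSymm_lapMatrix (R := ℝ)).eq]
  have hsum : ∀ v : Fin N → ℝ, ∑ j, (W *ᵥ v) j = ∑ j, v j := by
    intro v
    have h1 : ∑ j, (W *ᵥ v) j = (fun _ => (1:ℝ)) ⬝ᵥ (W *ᵥ v) := by
      simp [dotProduct]
    have h2 : (fun _ => (1:ℝ)) ᵥ* W = fun _ => (1:ℝ) := by
      rw [← Matrix.mulVec_transpose, hWsymm, hWone]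
    rw [h1, Matrix.dotProduct_mulVec, h2]
    simp [dotProduct]
  set y0 : Fin N → ℝ := fun j => x0 j - xbar j with hy0
  have hsumy0 : ∑ j, y0 j = 0 := by
    have hNne : (N:ℝ) ≠ 0 := by positivity
    rw [hy0]
    simp only [hxbar, Finset.sum_sub_distrib, Finset.sum_const, Finset.card_univ,
      Fintype.card_fin, nsmul_eq_mul]
    field_simp
    ring
  have hγnn : 0 ≤ γ₂ := by rw [hγ₂]; apply div_nonneg <;> linarith
  have main : ∀ i : ℕ, (∑ j, ((W ^ i) *ᵥ y0) j = 0) ∧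
      Real.sqrt (∑ j, ((W ^ i) *ᵥ y0) j ^ 2) ≤ γ₂ ^ i * Real.sqrt (∑ j, y0 j ^ 2) := by
    intro i
    induction i with
    | zero => simp [Matrix.one_mulVec, hsumy0]
    | succ i ih =>
      have hpow : (W ^ (i+1)) *ᵥ y0 = W *ᵥ ((W ^ i) *ᵥ y0) := by
        rw [pow_succ', Matrix.mulVec_mulVec]
      constructor
      · rw [hpow, hsum]
        exact ih.1
      · rw [hpow]
        calc Real.sqrt (∑ j, (W *ᵥ ((W ^ i) *ᵥ y0)) j ^ 2)
            ≤ γ₂ * Real.sqrt (∑ j, ((W ^ i) *ᵥ y0) j ^ 2) :=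
              stmt0_step N hN G hconn l2 lN α γ₂ hl2 hlN hl2pos hle hα hγ₂ W hW _ ih.1
        _ ≤ γ₂ * (γ₂ ^ i * Real.sqrt (∑ j, y0 j ^ 2)) :=
              mul_le_mul_of_nonneg_left ih.2 hγnn
        _ = γ₂ ^ (i+1) * Real.sqrt (∑ j, y0 j ^ 2) := by ring
  constructor
  · intro i
    have hWxbar : W *ᵥ xbar = xbar := by
      rw [hxbar]
      have e : (fun _ => (1/(N:ℝ)) * ∑ j, x0 j : Fin N → ℝ)
          = ((1/(N:ℝ)) * ∑ j, x0 j) • (fun _ => (1:ℝ)) := by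
        ext k; simp
      rw [e, Matrix.mulVec_smul, hWone]
    have hxb : (W ^ i) *ᵥ xbar = xbar := by
      induction i with
      | zero => simp [Matrix.one_mulVec]
      | succ i ih => rw [pow_succ', ← Matrix.mulVec_mulVec, ih, hWxbar]
    have key : (W ^ i) *ᵥ y0 = fun j => (W ^ i).mulVec x0 j - xbar j := by
      have e : (W ^ i) *ᵥ y0 = (W ^ i) *ᵥ x0 - (W ^ i) *ᵥ xbar := by
        rw [← Matrix.mulVec_sub]
        rfl
      rw [e, hxb]
      rfl
    have h := (main i).2
    rw [key] at h
    exact h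
  · rw [hγ₂]
    have hlNpos : 0 < lN := lt_of_lt_of_le hl2pos hle
    have h1 : lN + l2 ≠ 0 := by positivity
    field_simp
end

section
/- Let G be a connected simple graph on N ≥ 2 vertices with Laplacian L, α* = 2/(λ₂(L) + λ_N(L)), and W = I − α*L. Then the matrix powers W^i converge entrywise, as i → ∞, to the rank-one matrix (1/N)·𝟙𝟙ᵀ, where 𝟙 is the all-ones column vector. -/
open Filter Matrix

/-- For a connected simple graph on `N ≥ 2` vertices with Laplacian `L`,
`α* = 2/(λ₂(L) + λ_N(L))` and `W = I - α* L`, the powers `W^i` converge entrywise, as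
`i → ∞`, to the rank-one matrix `(1/N) 𝟙 𝟙ᵀ` (all of whose entries are `1/N`). -/
theorem stmt3 (N : ℕ) (hN : 2 ≤ N) (G : SimpleGraph (Fin N)) [DecidableRel G.Adj]
    (hconn : G.Connected) (l2 lN : ℝ)
    (hl2 : IsLeast {x : ℝ | x ∈ spectrum ℝ (G.lapMatrix ℝ) ∧ x ≠ 0} l2)
    (hlN : IsGreatest (spectrum ℝ (G.lapMatrix ℝ)) lN)
    (α : ℝ) (hα : α = 2 / (l2 + lN))
    (W : Matrix (Fin N) (Fin N) ℝ) (hW : W = 1 - α • G.lapMatrix ℝ) :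
    ∀ m n : Fin N,
      Tendsto (fun i : ℕ => (W ^ i) m n) atTop
        (nhds ((((N : ℝ))⁻¹ • Matrix.vecMulVec (fun _ : Fin N => (1 : ℝ))
          (fun _ : Fin N => (1 : ℝ))) m n)) := by
  intro m n
  have hNpos : (0 : ℝ) < N := by positivity
  set L : Matrix (Fin N) (Fin N) ℝ := G.lapMatrix ℝ with hLdef
  have hP : L.PosSemidef := G.posSemidef_lapMatrix ℝ
  have hH : L.IsHermitian := hP.1
  set U : Matrix (Fin N) (Fin N) ℝ := (hH.eigenvectorUnitary : Matrix (Fin N) (Fin N) ℝ)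
    with hUdef
  set μ : Fin N → ℝ := hH.eigenvalues with hμdef
  have hUU : U * star U = 1 := (Matrix.mem_unitaryGroup_iff).mp hH.eigenvectorUnitary.2
  have hUU' : star U * U = 1 := (Matrix.mem_unitaryGroup_iff').mp hH.eigenvectorUnitary.2
  -- basic spectral facts
  have hspec : ∀ k, μ k ∈ spectrum ℝ L := fun k => hH.eigenvalues_mem_spectrum_real k
  have hnn : ∀ k, 0 ≤ μ k := fun k => hP.eigenvalues_nonneg k
  have hl2pos : 0 < l2 := by
    obtain ⟨hmem, hne⟩ := hl2.1
    rw [hH.spectrum_real_eq_range_eigenvalues] at hmem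
    obtain ⟨j, hj⟩ := hmem
    exact lt_of_le_of_ne (hj ▸ hnn j) (Ne.symm hne)
  have hl2lN : l2 ≤ lN := hlN.2 hl2.1.1
  have hsumpos : 0 < l2 + lN := by linarith
  have hαpos : 0 < α := by rw [hα]; positivity
  -- contraction on nonzero eigenvalues
  have hcontr : ∀ k, μ k ≠ 0 → |1 - α * μ k| < 1 := by
    intro k hk
    have h1 : l2 ≤ μ k := hl2.2 ⟨hspec k, hk⟩
    have h2 : μ k ≤ lN := hlN.2 (hspec k)
    rw [abs_lt]
    constructor
    · have : α * μ k < 2 := by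
        rw [hα, div_mul_eq_mul_div, div_lt_iff₀ hsumpos]
        nlinarith
      linarith
    · nlinarith
  -- spectral decomposition of W
  have hDL : U * Matrix.diagonal μ * star U = L := by
    have := hH.spectral_theorem
    simpa [Function.comp] using this.symm
  have hdiag1 : Matrix.diagonal (fun k => 1 - α * μ k)
      = (1 : Matrix (Fin N) (Fin N) ℝ) - α • Matrix.diagonal μ := by
    rw [← Matrix.diagonal_one, ← Matrix.diagonal_smul, ← Matrix.diagonal_sub]
    rfl
  have hWdiag : W = U * Matrix.diagonal (fun k => 1 - α * μ k) * star U := by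
    rw [hdiag1, Matrix.mul_sub, Matrix.sub_mul, Matrix.mul_smul, Matrix.smul_mul, hDL, hW]
    rw [Matrix.mul_one, hUU]
  have hpow : ∀ i : ℕ, W ^ i = U * Matrix.diagonal (fun k => (1 - α * μ k) ^ i) * star U := by
    intro i
    induction i with
    | zero => simp [hUU]
    | succ i ih =>
        rw [pow_succ, ih, hWdiag]
        have hfun : (fun k => (1 - α * μ k) ^ i * (1 - α * μ k))
            = fun k => (1 - α * μ k) ^ (i + 1) := by
          funext k; rw [pow_succ]
        simp only [Matrix.mul_assoc]
        rw [← Matrix.mul_assoc (star U) U, hUU', Matrix.one_mul,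
          ← Matrix.mul_assoc (diagonal fun k => (1 - α * μ k) ^ i),
          Matrix.diagonal_mul_diagonal, hfun]
  have hentry : ∀ i : ℕ, (W ^ i) m n = ∑ k, U m k * ((1 - α * μ k) ^ i * U n k) := by
    intro i
    rw [hpow i, Matrix.mul_apply]
    refine Finset.sum_congr rfl fun k _ => ?_
    rw [Matrix.mul_diagonal, Matrix.star_apply, star_trivial]
    ring
  -- the zero eigenvalue: existence, column constancy, uniqueness
  have hveczero : ∀ k, μ k = 0 → ∀ i j : Fin N, hH.eigenvectorBasis k i = hH.eigenvectorBasis k j := by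
    intro k hk i j
    have hmv : L *ᵥ ⇑(hH.eigenvectorBasis k) = 0 := by
      rw [hH.mulVec_eigenvectorBasis, ← hμdef, hk]
      simp
    have := (G.lapMatrix_mulVec_eq_zero_iff_forall_reachable
      (x := ⇑(hH.eigenvectorBasis k))).mp hmv
    exact this i j (hconn.preconnected i j)
  have hinner : ∀ k k', (∑ j, hH.eigenvectorBasis k j * hH.eigenvectorBasis k' j)
      = if k = k' then 1 else 0 := by
    intro k k'
    have := (orthonormal_iff_ite.mp hH.eigenvectorBasis.orthonormal) k k'
    simpa [PiLp.inner_apply, RCLike.inner_apply, mul_comm] using this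
  have hvalsq : ∀ k, μ k = 0 → hH.eigenvectorBasis k m * hH.eigenvectorBasis k n = (N : ℝ)⁻¹ := by
    intro k hk
    have h1 := hinner k k
    rw [if_pos rfl] at h1
    have hc : ∀ j, hH.eigenvectorBasis k j = hH.eigenvectorBasis k m :=
      fun j => hveczero k hk j m
    rw [Finset.sum_congr rfl (fun j _ => by rw [hc j])] at h1
    rw [Finset.sum_const, Finset.card_univ, Fintype.card_fin, nsmul_eq_mul] at h1
    rw [hveczero k hk n m]
    field_simp
    linarith
  have hexists : ∃ k, μ k = 0 := by
    have hdet : L.det = 0 := by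
      rw [← Matrix.exists_mulVec_eq_zero_iff]
      refine ⟨fun _ => 1, ?_, G.lapMatrix_mulVec_const_eq_zero⟩
      intro h
      have : (1 : ℝ) = 0 := congrFun h ⟨0, by omega⟩
      norm_num at this
    have hprod : (∏ i, hH.eigenvalues i) = 0 := by
      have h2 := hH.det_eq_prod_eigenvalues
      rw [hdet] at h2
      exact_mod_cast h2.symm
    obtain ⟨k, _, hk⟩ := Finset.prod_eq_zero_iff.mp hprod
    exact ⟨k, hk⟩
  obtain ⟨k0, hk0⟩ := hexists
  have huniq : ∀ k, μ k = 0 → k = k0 := by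
    intro k hk
    by_contra hne
    have h0 := hinner k k0
    rw [if_neg hne] at h0
    have hck : ∀ j, hH.eigenvectorBasis k j = hH.eigenvectorBasis k m :=
      fun j => hveczero k hk j m
    have hck0 : ∀ j, hH.eigenvectorBasis k0 j = hH.eigenvectorBasis k0 m :=
      fun j => hveczero k0 hk0 j m
    rw [Finset.sum_congr rfl (fun j _ => by rw [hck j, hck0 j])] at h0
    rw [Finset.sum_const, Finset.card_univ, Fintype.card_fin, nsmul_eq_mul] at h0
    have hprod0 : hH.eigenvectorBasis k m * hH.eigenvectorBasis k0 m = 0 := by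
      have := mul_eq_zero.mp h0
      rcases this with h | h
      · exact absurd h (by positivity)
      · exact h
    rcases mul_eq_zero.mp hprod0 with h | h
    · have := hvalsq k hk
      rw [hveczero k hk n m, h] at this
      simp at this
      exact absurd this.symm (by positivity)
    · have := hvalsq k0 hk0
      rw [hveczero k0 hk0 n m, h] at this
      simp at this
      exact absurd this.symm (by positivity)
  -- compute the limit
  have htarget : ((((N : ℝ))⁻¹ • Matrix.vecMulVec (fun _ : Fin N => (1 : ℝ))
      (fun _ : Fin N => (1 : ℝ))) m n) = (N : ℝ)⁻¹ := by
    simp [Matrix.vecMulVec_apply]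
  rw [htarget]
  have hlimsum : (N : ℝ)⁻¹
      = ∑ k, (if μ k = 0 then U m k * U n k else 0) := by
    rw [Finset.sum_eq_single k0]
    · rw [if_pos hk0]
      have : U m k0 * U n k0 = hH.eigenvectorBasis k0 m * hH.eigenvectorBasis k0 n := by
        simp [hUdef]
      rw [this, hvalsq k0 hk0]
    · intro k _ hk
      rw [if_neg (fun h => hk (huniq k h))]
    · intro h
      exact absurd (Finset.mem_univ k0) h
  rw [hlimsum]
  have : (fun i : ℕ => (W ^ i) m n)
      = fun i : ℕ => ∑ k, U m k * ((1 - α * μ k) ^ i * U n k) := funext hentry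
  rw [this]
  refine tendsto_finset_sum _ fun k _ => ?_
  by_cases hk : μ k = 0
  · rw [if_pos hk]
    have : (fun i : ℕ => U m k * ((1 - α * μ k) ^ i * U n k))
        = fun _ : ℕ => U m k * U n k := by
      funext i
      rw [hk]
      simp
    rw [this]
    exact tendsto_const_nhds
  · rw [if_neg hk]
    have h0 : Tendsto (fun i : ℕ => (1 - α * μ k) ^ i) atTop (nhds 0) :=
      tendsto_pow_atTop_nhds_zero_of_abs_lt_one (hcontr k hk)
    have := (h0.mul_const (U n k)).const_mul (U m k)
    simpa using this
end

section
/- Let G be a connected simple graph on N ≥ 2 vertices with Laplacian L, α* = 2/(λ₂(L) + λ_N(L)), W = I − α*L, and γ₂ = (λ_N(L) − λ₂(L))/(λ_N(L) + λ₂(L)). Then for every integer k ≥ 0 and every index n ∈ {1,…,N}, the diagonal entry of the even power of W satisfies (W^{2k})_{nn} ≤ 1/N + γ₂^{2k}·(1 − 1/N). -/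
open Matrix Finset

private lemma conj_pow_aux {N : ℕ} (U D : Matrix (Fin N) (Fin N) ℝ)
    (h1 : U * star U = 1) (h2 : star U * U = 1) (m : ℕ) :
    (U * D * star U) ^ m = U * D ^ m * star U := by
  induction m with
  | zero => simp [h1]
  | succ m ih =>
      rw [pow_succ, ih, pow_succ]
      calc U * D ^ m * star U * (U * D * star U)
          = U * D ^ m * (star U * U) * (D * star U) := by
            simp only [Matrix.mul_assoc]
        _ = U * (D ^ m * D) * star U := by
            rw [h2, Matrix.mul_one]; simp only [Matrix.mul_assoc]

/-- Diagonal entries of even powers of the optimal consensus matrix: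
for a connected simple graph on `N ≥ 2` vertices, `W = I - α* L` with
`α* = 2/(λ₂(L)+λ_N(L))` and `γ₂ = (λ_N(L)-λ₂(L))/(λ_N(L)+λ₂(L))`, one has
`(W^{2k})_{nn} ≤ 1/N + γ₂^{2k} (1 - 1/N)` for all `k ≥ 0` and all `n`. -/
theorem stmt7 (N : ℕ) (hN : 2 ≤ N) (G : SimpleGraph (Fin N)) [DecidableRel G.Adj]
    (hconn : G.Connected) (l2 lN : ℝ)
    (hl2 : IsLeast {x : ℝ | x ∈ spectrum ℝ (G.lapMatrix ℝ) ∧ x ≠ 0} l2)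
    (hlN : IsGreatest (spectrum ℝ (G.lapMatrix ℝ)) lN)
    (α γ₂ : ℝ) (hα : α = 2 / (l2 + lN)) (hγ₂ : γ₂ = (lN - l2) / (lN + l2))
    (W : Matrix (Fin N) (Fin N) ℝ) (hW : W = 1 - α • G.lapMatrix ℝ) :
    ∀ (k : ℕ) (n : Fin N),
      (W ^ (2 * k)) n n ≤ 1 / (N : ℝ) + γ₂ ^ (2 * k) * (1 - 1 / (N : ℝ)) := by
  intro k n
  have hNpos : (0 : ℝ) < N := by
    have : (2 : ℝ) ≤ N := by exact_mod_cast hN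
    linarith
  have hL : (G.lapMatrix ℝ).IsHermitian := (G.posSemidef_lapMatrix ℝ).1
  set μ : Fin N → ℝ := hL.eigenvalues with hμdef
  set U : Matrix (Fin N) (Fin N) ℝ := (hL.eigenvectorUnitary : Matrix (Fin N) (Fin N) ℝ)
    with hUdef
  have h1 : U * star U = 1 := Matrix.mem_unitaryGroup_iff.mp hL.eigenvectorUnitary.2
  have h2 : star U * U = 1 := Matrix.mem_unitaryGroup_iff'.mp hL.eigenvectorUnitary.2
  have hspec : G.lapMatrix ℝ = U * Matrix.diagonal μ * star U := by
    have h := hL.spectral_theorem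
    simpa [RCLike.ofReal_real_eq_id] using h
  -- eigenvalue facts
  have hnn : ∀ i, 0 ≤ μ i := fun i => (G.posSemidef_lapMatrix ℝ).eigenvalues_nonneg i
  have hmem : ∀ i, μ i ∈ spectrum ℝ (G.lapMatrix ℝ) := fun i =>
    hL.eigenvalues_mem_spectrum_real i
  have hub : ∀ i, μ i ≤ lN := fun i => hlN.2 (hmem i)
  have hl2pos : 0 < l2 := by
    obtain ⟨hmem2, hne⟩ := hl2.1
    rw [hL.spectrum_real_eq_range_eigenvalues] at hmem2
    obtain ⟨j, hj⟩ := hmem2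
    exact lt_of_le_of_ne (hj ▸ hnn j) (Ne.symm hne)
  have hl2N : l2 ≤ lN := hlN.2 hl2.1.1
  have hs : 0 < l2 + lN := by linarith
  have hγnn : 0 ≤ γ₂ := by rw [hγ₂]; apply div_nonneg <;> linarith
  have hγle1 : γ₂ ≤ 1 := by rw [hγ₂, div_le_one (by linarith)]; linarith
  -- coefficient bound
  have hcoef : ∀ i, μ i ≠ 0 → (1 - α * μ i) ^ (2 * k) ≤ γ₂ ^ (2 * k) := by
    intro i hi
    have hlo : l2 ≤ μ i := hl2.2 ⟨hmem i, hi⟩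
    have habs : |1 - α * μ i| ≤ γ₂ := by
      have e : 1 - α * μ i = (l2 + lN - 2 * μ i) / (l2 + lN) := by
        rw [hα]; field_simp
      have hγe : γ₂ = (lN - l2) / (l2 + lN) := by rw [hγ₂, add_comm lN l2]
      rw [abs_le, e, hγe]
      constructor
      · rw [← neg_div, div_le_div_iff₀ hs hs]
        nlinarith [mul_nonneg (sub_nonneg.mpr (hub i)) hs.le]
      · rw [div_le_div_iff₀ hs hs]
        nlinarith [mul_nonneg (sub_nonneg.mpr hlo) hs.le]
    calc (1 - α * μ i) ^ (2 * k) = |1 - α * μ i| ^ (2 * k) :=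
          ((even_two_mul k).pow_abs _).symm
      _ ≤ γ₂ ^ (2 * k) := pow_le_pow_left₀ (abs_nonneg _) habs _
  -- diagonal entry formula
  have hWeq : W = U * Matrix.diagonal (fun i => 1 - α * μ i) * star U := by
    have hd : Matrix.diagonal (fun i => 1 - α * μ i)
        = (1 : Matrix (Fin N) (Fin N) ℝ) - α • Matrix.diagonal μ := by
      ext i j
      by_cases h : i = j <;> simp [Matrix.diagonal_apply, h, Matrix.one_apply]
    rw [hW, hd, Matrix.mul_sub, Matrix.mul_one, Matrix.sub_mul, h1, hspec]
    congr 1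
    rw [Matrix.mul_smul, Matrix.smul_mul]
  have hWpow : W ^ (2 * k)
      = U * Matrix.diagonal (fun i => (1 - α * μ i) ^ (2 * k)) * star U := by
    rw [hWeq, conj_pow_aux U _ h1 h2, Matrix.diagonal_pow]
    rfl
  have hentry : (W ^ (2 * k)) n n = ∑ i, (1 - α * μ i) ^ (2 * k) * (U n i) ^ 2 := by
    rw [hWpow, Matrix.mul_apply]
    simp only [Matrix.mul_diagonal, Matrix.star_apply, star_trivial]
    exact Finset.sum_congr rfl fun i _ => by ring
  have hsum1 : ∑ i, (U n i) ^ 2 = 1 := by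
    have h := Matrix.ext_iff.mpr h1 n n
    rw [Matrix.mul_apply, Matrix.one_apply_eq] at h
    simpa [Matrix.star_apply, sq] using h
  -- zero-eigenvalue columns are constant
  have hconst : ∀ i, μ i = 0 → ∀ a b : Fin N, U a i = U b i := by
    intro i hi a b
    have hv0 : Matrix.toLin' (G.lapMatrix ℝ) ⇑(hL.eigenvectorBasis i) = 0 := by
      rw [Matrix.toLin'_apply, hL.mulVec_eigenvectorBasis]
      rw [show hL.eigenvalues i = 0 from hi]
      simp
    have hv0' : G.lapMatrix ℝ *ᵥ ⇑(hL.eigenvectorBasis i) = 0 := by rwa [Matrix.toLin'_apply] at hv0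
    have hr := G.lapMatrix_mulVec_eq_zero_iff_forall_reachable.mp hv0'
    have ha : U a i = hL.eigenvectorBasis i a := hL.eigenvectorUnitary_apply a i
    have hb : U b i = hL.eigenvectorBasis i b := hL.eigenvectorUnitary_apply b i
    rw [ha, hb]
    exact hr a b (hconn.preconnected a b)
  have hcolnorm : ∀ i, ∑ m, (U m i) ^ 2 = 1 := by
    intro i
    have h := Matrix.ext_iff.mpr h2 i i
    rw [Matrix.mul_apply, Matrix.one_apply_eq] at h
    simpa [Matrix.star_apply, sq] using h
  have hzerosq : ∀ i, μ i = 0 → ∀ a : Fin N, (U a i) ^ 2 = 1 / (N : ℝ) := by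
    intro i hi a
    have : (N : ℝ) * (U a i) ^ 2 = 1 := by
      calc (N : ℝ) * (U a i) ^ 2 = ∑ _m : Fin N, (U a i) ^ 2 := by
            simp [Finset.sum_const, mul_comm]
        _ = ∑ m, (U m i) ^ 2 := Finset.sum_congr rfl fun m _ => by
            rw [hconst i hi a m]
        _ = 1 := hcolnorm i
    field_simp at this ⊢
    linarith
  -- uniqueness of the zero eigenvalue index
  have huniq : ∀ i j : Fin N, μ i = 0 → μ j = 0 → i = j := by
    intro i j hi hj
    by_contra hne
    have h := Matrix.ext_iff.mpr h2 i j
    rw [Matrix.mul_apply, Matrix.one_apply_ne hne] at h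
    have hsum : ∑ m, U m i * U m j = 0 := by
      simpa [Matrix.star_apply] using h
    have hcc : ∀ m : Fin N, U m i * U m j = U n i * U n j := fun m => by
      rw [hconst i hi m n, hconst j hj m n]
    have : (N : ℝ) * (U n i * U n j) = 0 := by
      calc (N : ℝ) * (U n i * U n j) = ∑ _m : Fin N, U n i * U n j := by
            simp [Finset.sum_const, mul_comm]
        _ = ∑ m, U m i * U m j := Finset.sum_congr rfl fun m _ => (hcc m).symm
        _ = 0 := hsum
    have hprod0 : U n i * U n j = 0 := by
      rcases mul_eq_zero.mp this with h' | h'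
      · exact absurd h' (ne_of_gt hNpos)
      · exact h'
    have hi' := hzerosq i hi n
    have hj' := hzerosq j hj n
    rcases mul_eq_zero.mp hprod0 with h' | h' <;>
      [rw [h'] at hi'; rw [h'] at hj'] <;>
      [skip; skip] <;> simp at hi' hj' <;>
      [exact absurd hi'.symm (by positivity); exact absurd hj'.symm (by positivity)]
    -- final assembly
  by_cases hex : ∃ i₀, μ i₀ = 0
  · obtain ⟨i₀, hi₀⟩ := hex
    have hx0 : (U n i₀) ^ 2 = 1 / (N : ℝ) := hzerosq i₀ hi₀ n
    have hc0 : (1 - α * μ i₀) ^ (2 * k) = 1 := by rw [hi₀]; simp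
    have hsplit := Finset.add_sum_erase Finset.univ
      (fun i => (1 - α * μ i) ^ (2 * k) * (U n i) ^ 2) (Finset.mem_univ i₀)
    have hrest : ∑ i ∈ Finset.univ.erase i₀, (U n i) ^ 2 = 1 - 1 / (N : ℝ) := by
      have h := Finset.add_sum_erase Finset.univ (fun i => (U n i) ^ 2)
        (Finset.mem_univ i₀)
      rw [hsum1, hx0] at h
      linarith
    have hbound : ∑ i ∈ Finset.univ.erase i₀, (1 - α * μ i) ^ (2 * k) * (U n i) ^ 2
        ≤ γ₂ ^ (2 * k) * (1 - 1 / (N : ℝ)) := by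
      calc ∑ i ∈ Finset.univ.erase i₀, (1 - α * μ i) ^ (2 * k) * (U n i) ^ 2
          ≤ ∑ i ∈ Finset.univ.erase i₀, γ₂ ^ (2 * k) * (U n i) ^ 2 := by
            refine Finset.sum_le_sum fun i hi => ?_
            have hμne : μ i ≠ 0 := fun h0 => (Finset.ne_of_mem_erase hi)
              (huniq i i₀ h0 hi₀)
            exact mul_le_mul_of_nonneg_right (hcoef i hμne) (sq_nonneg _)
        _ = γ₂ ^ (2 * k) * (1 - 1 / (N : ℝ)) := by rw [← Finset.mul_sum, hrest]
    rw [hentry, ← hsplit, hc0, one_mul, hx0]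
    linarith
  · push_neg at hex
    have hγk1 : γ₂ ^ (2 * k) ≤ 1 := pow_le_one₀ hγnn hγle1
    rw [hentry]
    calc ∑ i, (1 - α * μ i) ^ (2 * k) * (U n i) ^ 2
        ≤ ∑ i, γ₂ ^ (2 * k) * (U n i) ^ 2 :=
          Finset.sum_le_sum fun i _ =>
            mul_le_mul_of_nonneg_right (hcoef i (hex i)) (sq_nonneg _)
      _ = γ₂ ^ (2 * k) := by rw [← Finset.mul_sum, hsum1, mul_one]
      _ ≤ 1 / (N : ℝ) + γ₂ ^ (2 * k) * (1 - 1 / (N : ℝ)) := by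
          have h1N : 0 < 1 / (N : ℝ) := by positivity
          nlinarith
end

section
/- Let G be a connected simple graph on N ≥ 2 vertices with Laplacian L, α* = 2/(λ₂(L) + λ_N(L)), W = I − α*L, and γ₂ = (λ_N(L) − λ₂(L))/(λ_N(L) + λ₂(L)). Let X₀, n₀, n₁, … be mutually independent square-integrable random vectors in ℝ^N with Cov(X₀) = (4μ²/σ²)·I and Cov(n_i) = R = diag(φ₁², …, φ_N²) for all i, and define X_{i+1} = W X_i + n_i. Set φ_max² = max_j φ_j². Then for every iteration i ≥ 0 and every coordinate n, Var(X_n(i)) ≤ (4μ²/σ²)·[1/N + γ₂^{2i}(1 − 1/N)] + φ_max²·[ i/N + ((1 − γ₂^{2i})/(1 − γ₂²))·(1 − 1/N) ]. -/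
open MeasureTheory ProbabilityTheory Matrix RealInnerProductSpace

/-- The covariance matrix of a random vector `X : Ω → (Fin N → ℝ)`:
entry `(m, n)` is `Cov(X_m, X_n) = E[(X_m - E X_m)(X_n - E X_n)]`. -/
noncomputable def covMatrix {N : ℕ} {Ω : Type*} [MeasurableSpace Ω]
    (P : Measure Ω) (X : Ω → Fin N → ℝ) : Matrix (Fin N) (Fin N) ℝ :=
  Matrix.of fun m n =>
    ∫ ω, (X ω m - ∫ ω', X ω' m ∂P) * (X ω n - ∫ ω', X ω' n ∂P) ∂P



lemma stmt9_scalar (N : ℕ) (hN : 2 ≤ N) (G : SimpleGraph (Fin N)) [DecidableRel G.Adj]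
    (hconn : G.Connected) (l2 lN : ℝ)
    (hl2 : IsLeast {x : ℝ | x ∈ spectrum ℝ (G.lapMatrix ℝ) ∧ x ≠ 0} l2)
    (hlN : IsGreatest (spectrum ℝ (G.lapMatrix ℝ)) lN) : 0 < l2 ∧ l2 ≤ lN := by
  have hL : (G.lapMatrix ℝ).IsHermitian := (SimpleGraph.posSemidef_lapMatrix ℝ G).1
  have hspec := hL.spectrum_real_eq_range_eigenvalues
  have h2 : 0 < l2 := by
    have hmem := hl2.1.1
    rw [hspec] at hmem
    obtain ⟨i, hi⟩ := hmem
    have := (SimpleGraph.posSemidef_lapMatrix ℝ G).eigenvalues_nonneg i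
    rcases this.lt_or_eq with h | h
    · rwa [← hi]
    · exact absurd (by rw [← hi, ← h]) hl2.1.2
  exact ⟨h2, hlN.2 hl2.1.1⟩

lemma stmt9_spectral (N : ℕ) (hN : 2 ≤ N) (G : SimpleGraph (Fin N)) [DecidableRel G.Adj]
    (hconn : G.Connected) (l2 lN : ℝ) (hl2pos : 0 < l2) (hllN : l2 ≤ lN)
    (hl2 : IsLeast {x : ℝ | x ∈ spectrum ℝ (G.lapMatrix ℝ) ∧ x ≠ 0} l2)
    (hlN : IsGreatest (spectrum ℝ (G.lapMatrix ℝ)) lN)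
    (α γ₂ : ℝ) (hα : α = 2 / (l2 + lN)) (hγ₂ : γ₂ = (lN - l2) / (lN + l2))
    (W : Matrix (Fin N) (Fin N) ℝ) (hW : W = 1 - α • G.lapMatrix ℝ)
    (hγ0 : 0 ≤ γ₂) (hγ1 : γ₂ < 1) :
    ∀ (k : ℕ) (n : Fin N),
      (W ^ k * (W ^ k)ᵀ) n n ≤ 1 / N + γ₂ ^ (2 * k) * (1 - 1 / N) := by
  classical
  have hNpos : (0 : ℝ) < N := by positivity
  have hL : (G.lapMatrix ℝ).IsHermitian := (SimpleGraph.posSemidef_lapMatrix ℝ G).1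
  set U : Matrix (Fin N) (Fin N) ℝ := (hL.eigenvectorUnitary : Matrix (Fin N) (Fin N) ℝ) with hU
  set lam : Fin N → ℝ := hL.eigenvalues with hlam
  have hstarU : star U = Uᵀ := by
    rw [Matrix.star_eq_conjTranspose]
    ext i j
    simp [Matrix.conjTranspose_apply]
  have hUUt : U * Uᵀ = 1 := by
    rw [← hstarU]; exact Matrix.mem_unitaryGroup_iff.mp hL.eigenvectorUnitary.2
  have hUtU : Uᵀ * U = 1 := by
    rw [← hstarU]; exact Matrix.mem_unitaryGroup_iff'.mp hL.eigenvectorUnitary.2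
  have hspec : G.lapMatrix ℝ = U * diagonal lam * Uᵀ := by
    rw [← hstarU]; exact hL.spectral_theorem
  set d : Fin N → ℝ := fun j => 1 - α * lam j with hd
  have hWspec : W = U * diagonal d * Uᵀ := by
    have h1 : diagonal d = 1 - α • diagonal lam := by
      ext i j
      by_cases h : i = j
      · subst h; simp [hd, Matrix.one_apply_eq]
      · simp [Matrix.diagonal_apply_ne _ h, Matrix.one_apply_ne h]
    rw [hW, hspec, h1, Matrix.mul_sub, Matrix.sub_mul, Matrix.mul_one, hUUt,
      Matrix.mul_smul, Matrix.smul_mul]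
  have hpow : ∀ k : ℕ, W ^ k = U * diagonal (fun j => d j ^ k) * Uᵀ := by
    intro k
    induction k with
    | zero => simp [Matrix.diagonal_one, hUUt]
    | succ k ih =>
        rw [pow_succ, ih, hWspec]
        calc U * diagonal (fun j => d j ^ k) * Uᵀ * (U * diagonal d * Uᵀ)
            = U * diagonal (fun j => d j ^ k) * (Uᵀ * U) * diagonal d * Uᵀ := by
              simp only [Matrix.mul_assoc]
          _ = U * (diagonal (fun j => d j ^ k) * diagonal d) * Uᵀ := by
              rw [hUtU]; simp only [Matrix.mul_one, Matrix.mul_assoc]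
          _ = U * diagonal (fun j => d j ^ (k + 1)) * Uᵀ := by
              rw [Matrix.diagonal_mul_diagonal]
              simp only [pow_succ]
  have hdiag : ∀ (e : Fin N → ℝ) (n : Fin N),
      (U * diagonal e * Uᵀ) n n = ∑ j, e j * (U n j) ^ 2 := by
    intro e n
    rw [Matrix.mul_apply]
    refine Finset.sum_congr rfl fun j _ => ?_
    rw [Matrix.mul_diagonal, Matrix.transpose_apply]
    ring
  have hrow : ∀ n : Fin N, ∑ j, (U n j) ^ 2 = 1 := by
    intro n
    have := congrArg (fun M => M n n) hUUt
    simp only [Matrix.mul_apply, Matrix.one_apply_eq, Matrix.transpose_apply] at this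
    rw [← this]
    exact Finset.sum_congr rfl fun j _ => (sq (U n j)).symm ▸ by ring
  intro k n
  have hWk : (W ^ k * (W ^ k)ᵀ) n n = ∑ j, (d j ^ (2 * k)) * (U n j) ^ 2 := by
    have ht : (W ^ k)ᵀ = W ^ k := by
      rw [hpow k, Matrix.transpose_mul, Matrix.transpose_mul, Matrix.transpose_transpose,
        Matrix.diagonal_transpose, Matrix.mul_assoc]
    rw [ht, ← pow_add, hpow, hdiag]
    refine Finset.sum_congr rfl fun j _ => ?_
    rw [two_mul]
  rw [hWk]
  -- per-eigenvalue bound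
  have hsum : l2 + lN > 0 := by linarith
  have hne : l2 + lN ≠ 0 := ne_of_gt hsum
  have hne' : lN + l2 ≠ 0 := by rw [add_comm]; exact hne
  have hαl2 : α * l2 = 1 - γ₂ := by
    rw [hα, hγ₂]
    field_simp
    ring
  have hαlN : α * lN = 1 + γ₂ := by
    rw [hα, hγ₂]
    field_simp
    ring
  have hαpos : 0 < α := by rw [hα]; positivity
  have hdbound : ∀ j, lam j ≠ 0 → d j ^ 2 ≤ γ₂ ^ 2 := by
    intro j hj
    have hmem : lam j ∈ spectrum ℝ (G.lapMatrix ℝ) := hL.eigenvalues_mem_spectrum_real j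
    have h1 : l2 ≤ lam j := hl2.2 ⟨hmem, hj⟩
    have h2 : lam j ≤ lN := hlN.2 hmem
    have hle : d j ≤ γ₂ := by
      have : α * l2 ≤ α * lam j := by nlinarith
      simp only [hd]; nlinarith
    have hge : -γ₂ ≤ d j := by
      have : α * lam j ≤ α * lN := by nlinarith
      simp only [hd]; nlinarith
    exact sq_le_sq' hge hle
  -- kernel analysis
  set S₀ : Finset (Fin N) := Finset.univ.filter (fun j => lam j = 0) with hS₀
  have hker : ∀ j ∈ S₀, ∀ a : Fin N, (hL.eigenvectorBasis j a) ^ 2 = 1 / N := by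
    intro j hj a
    have hj0 : lam j = 0 := (Finset.mem_filter.mp hj).2
    have hv : G.lapMatrix ℝ *ᵥ ⇑(hL.eigenvectorBasis j) = 0 := by
      rw [hL.mulVec_eigenvectorBasis, ← hlam, hj0, zero_smul]
    have hconst : ∀ a b : Fin N, hL.eigenvectorBasis j a = hL.eigenvectorBasis j b := by
      have := (SimpleGraph.lapMatrix_mulVec_eq_zero_iff_forall_reachable (G := G)
        (x := ⇑(hL.eigenvectorBasis j))).mp (by exact hv)
      intro a b; exact this a b (hconn.preconnected a b)
    have hnorm : ∑ b, (hL.eigenvectorBasis j b) ^ 2 = 1 := by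
      have h1 : ‖hL.eigenvectorBasis j‖ = 1 := hL.eigenvectorBasis.orthonormal.1 j
      have h2 : (⟪hL.eigenvectorBasis j, hL.eigenvectorBasis j⟫) = 1 := by
        rw [real_inner_self_eq_norm_sq, h1]; norm_num
      rw [← h2, PiLp.inner_apply]
      exact Finset.sum_congr rfl fun b _ => by
        simp only [RCLike.inner_apply, starRingEnd_apply, star_trivial, sq]
    have hallsame : ∀ b, (hL.eigenvectorBasis j b) ^ 2 = (hL.eigenvectorBasis j a) ^ 2 := by
      intro b; rw [hconst b a]
    rw [eq_comm, div_eq_iff (ne_of_gt hNpos), ← hnorm]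
    rw [Finset.sum_congr rfl fun b _ => hallsame b, Finset.sum_const, Finset.card_univ,
      Fintype.card_fin, nsmul_eq_mul, mul_comm]
  have hcard : S₀.card ≤ 1 := by
    rw [Finset.card_le_one]
    intro a ha b hb
    by_contra hab
    have horth : ⟪hL.eigenvectorBasis a, hL.eigenvectorBasis b⟫ = 0 :=
      hL.eigenvectorBasis.orthonormal.2 hab
    rw [PiLp.inner_apply] at horth
    simp only [RCLike.inner_apply, starRingEnd_apply, star_trivial] at horth
    have hconsts : ∀ c : Fin N, hL.eigenvectorBasis a c * hL.eigenvectorBasis b c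
        = hL.eigenvectorBasis a n * hL.eigenvectorBasis b n := by
      intro c
      have hj0a : lam a = 0 := (Finset.mem_filter.mp ha).2
      have hj0b : lam b = 0 := (Finset.mem_filter.mp hb).2
      have hva : G.lapMatrix ℝ *ᵥ ⇑(hL.eigenvectorBasis a) = 0 := by
        rw [hL.mulVec_eigenvectorBasis, ← hlam, hj0a, zero_smul]
      have hvb : G.lapMatrix ℝ *ᵥ ⇑(hL.eigenvectorBasis b) = 0 := by
        rw [hL.mulVec_eigenvectorBasis, ← hlam, hj0b, zero_smul]
      have hca := (SimpleGraph.lapMatrix_mulVec_eq_zero_iff_forall_reachable (G := G)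
        (x := ⇑(hL.eigenvectorBasis a))).mp (by exact hva)
      have hcb := (SimpleGraph.lapMatrix_mulVec_eq_zero_iff_forall_reachable (G := G)
        (x := ⇑(hL.eigenvectorBasis b))).mp (by exact hvb)
      have e1 : hL.eigenvectorBasis a c = hL.eigenvectorBasis a n :=
        hca c n (hconn.preconnected c n)
      have e2 : hL.eigenvectorBasis b c = hL.eigenvectorBasis b n :=
        hcb c n (hconn.preconnected c n)
      rw [e1, e2]
    rw [Finset.sum_congr rfl fun c _ => (mul_comm _ _).trans (hconsts c), Finset.sum_const, Finset.card_univ,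
      Fintype.card_fin, nsmul_eq_mul] at horth
    have hNne : (N : ℝ) ≠ 0 := ne_of_gt hNpos
    have hprod0 : hL.eigenvectorBasis a n * hL.eigenvectorBasis b n = 0 := by
      rcases mul_eq_zero.mp horth with h | h
      · exact absurd h hNne
      · exact h
    have hx := hker a ha n
    have hy := hker b hb n
    have h2 : (hL.eigenvectorBasis a n) ^ 2 * (hL.eigenvectorBasis b n) ^ 2 = 0 := by
      rw [← mul_pow, hprod0]
      norm_num
    rw [hx, hy] at h2
    have hpos : (0:ℝ) < 1/(N:ℝ) * (1/(N:ℝ)) := by positivity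
    linarith
  -- assemble
  have hUentry : ∀ j, U n j = hL.eigenvectorBasis j n := fun j => rfl
  have hγpow : γ₂ ^ (2 * k) ≤ 1 := pow_le_one₀ hγ0 hγ1.le
  have hsplit := (Finset.sum_filter_add_sum_filter_not Finset.univ
    (fun j => lam j = 0) (fun j => (d j ^ (2 * k)) * (U n j) ^ 2)).symm
  set c : ℝ := (S₀.card : ℝ) / N with hc
  have hS0sum : ∑ j ∈ S₀, (d j ^ (2 * k)) * (U n j) ^ 2 = c := by
    rw [hc]
    have : ∀ j ∈ S₀, (d j ^ (2 * k)) * (U n j) ^ 2 = 1 / N := by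
      intro j hj
      have hj0 : lam j = 0 := (Finset.mem_filter.mp hj).2
      have hd1 : d j = 1 := by simp only [hd]; rw [hj0, mul_zero, sub_zero]
      rw [hd1, one_pow, one_mul, hUentry, hker j hj]
    rw [Finset.sum_congr rfl this, Finset.sum_const, nsmul_eq_mul]
    ring
  have hS0c : ∑ j ∈ S₀, (U n j) ^ 2 = c := by
    rw [hc]
    have : ∀ j ∈ S₀, (U n j) ^ 2 = 1 / N := fun j hj => by rw [hUentry, hker j hj]
    rw [Finset.sum_congr rfl this, Finset.sum_const, nsmul_eq_mul]
    ring
  have hcompl : ∑ j ∈ Finset.univ.filter (fun j => ¬ lam j = 0), (U n j) ^ 2 = 1 - c := by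
    have := Finset.sum_filter_add_sum_filter_not Finset.univ
      (fun j => lam j = 0) (fun j => (U n j) ^ 2)
    rw [hrow n] at this
    have h2 : ∑ j ∈ Finset.univ.filter (fun j => lam j = 0), (U n j) ^ 2 = c := hS0c
    linarith
  have hcomplbound : ∑ j ∈ Finset.univ.filter (fun j => ¬ lam j = 0),
      (d j ^ (2 * k)) * (U n j) ^ 2 ≤ γ₂ ^ (2 * k) * (1 - c) := by
    rw [← hcompl, Finset.mul_sum]
    refine Finset.sum_le_sum fun j hj => ?_
    have hj0 : lam j ≠ 0 := (Finset.mem_filter.mp hj).2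
    have : d j ^ (2 * k) ≤ γ₂ ^ (2 * k) := by
      rw [pow_mul, pow_mul]
      exact pow_le_pow_left₀ (sq_nonneg _) (hdbound j hj0) k
    exact mul_le_mul_of_nonneg_right this (sq_nonneg _)
  have hcle : c ≤ 1 / N := by
    rw [hc, div_le_div_iff₀ hNpos hNpos]
    have : (S₀.card : ℝ) ≤ 1 := by exact_mod_cast hcard
    nlinarith
  have hcnonneg : 0 ≤ c := div_nonneg (Nat.cast_nonneg _) hNpos.le
  calc ∑ j, (d j ^ (2 * k)) * (U n j) ^ 2
      = (∑ j ∈ S₀, (d j ^ (2 * k)) * (U n j) ^ 2)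
        + ∑ j ∈ Finset.univ.filter (fun j => ¬ lam j = 0),
            (d j ^ (2 * k)) * (U n j) ^ 2 := hsplit
    _ ≤ c + γ₂ ^ (2 * k) * (1 - c) := by
        rw [hS0sum]
        exact add_le_add_right hcomplbound c
    _ ≤ 1 / N + γ₂ ^ (2 * k) * (1 - 1 / N) := by nlinarith


lemma stmt9_mulL2 {Ω : Type*} [MeasurableSpace Ω] {P : Measure Ω} [IsProbabilityMeasure P]
    {f g : Ω → ℝ} (hf : MemLp f 2 P) (hg : MemLp g 2 P) :
    Integrable (fun ω => f ω * g ω) P := by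
  have h : Integrable (fun ω => (f ω ^ 2 + g ω ^ 2) / 2) P :=
    (hf.integrable_sq.add hg.integrable_sq).div_const 2
  refine h.mono' (hf.1.mul hg.1) ?_
  filter_upwards with ω
  simp only [norm_mul, Real.norm_eq_abs]
  have h1 := sq_nonneg (|f ω| - |g ω|)
  have h2 : |f ω| ^ 2 = f ω ^ 2 := sq_abs _
  have h3 : |g ω| ^ 2 = g ω ^ 2 := sq_abs _
  nlinarith [abs_nonneg (f ω), abs_nonneg (g ω)]

lemma stmt9_covstep {N : ℕ} {Ω : Type*} [MeasurableSpace Ω] (P : Measure Ω)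
    [IsProbabilityMeasure P]
    (W : Matrix (Fin N) (Fin N) ℝ) (X ξ : Ω → Fin N → ℝ)
    (hX2 : ∀ n, MemLp (fun ω => X ω n) 2 P) (hξ2 : ∀ n, MemLp (fun ω => ξ ω n) 2 P)
    (hind : IndepFun X ξ P) :
    covMatrix P (fun ω => W.mulVec (X ω) + ξ ω)
      = W * covMatrix P X * Wᵀ + covMatrix P ξ := by
  set a : Fin N → ℝ := fun p => ∫ ω, X ω p ∂P with ha
  set b : Fin N → ℝ := fun p => ∫ ω, ξ ω p ∂P with hb
  set f : Fin N → Ω → ℝ := fun p ω => X ω p - a p with hfdef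
  set g : Fin N → Ω → ℝ := fun p ω => ξ ω p - b p with hgdef
  have hf2 : ∀ p, MemLp (f p) 2 P := fun p => (hX2 p).sub (memLp_const (a p))
  have hg2 : ∀ p, MemLp (g p) 2 P := fun p => (hξ2 p).sub (memLp_const (b p))
  have hfInt : ∀ p, Integrable (f p) P := fun p => (hf2 p).integrable one_le_two
  have hgInt : ∀ p, Integrable (g p) P := fun p => (hg2 p).integrable one_le_two
  have hXInt : ∀ p, Integrable (fun ω => X ω p) P := fun p => (hX2 p).integrable one_le_two
  have hξInt : ∀ p, Integrable (fun ω => ξ ω p) P := fun p => (hξ2 p).integrable one_le_two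
  have hfmean : ∀ p, ∫ ω, f p ω ∂P = 0 := by
    intro p
    simp only [hfdef]
    rw [integral_sub (hXInt p) (integrable_const _), integral_const]
    simp [ha]
  have hgmean : ∀ p, ∫ ω, g p ω ∂P = 0 := by
    intro p
    simp only [hgdef]
    rw [integral_sub (hξInt p) (integrable_const _), integral_const]
    simp [hb]
  -- independence of centered coordinates
  have hindpq : ∀ p q, IndepFun (f p) (g q) P := by
    intro p q
    have hm1 : Measurable (fun v : Fin N → ℝ => v p - a p) :=
      (measurable_pi_apply p).sub measurable_const
    have hm2 : Measurable (fun v : Fin N → ℝ => v q - b q) :=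
      (measurable_pi_apply q).sub measurable_const
    exact hind.comp hm1 hm2
  have hcross : ∀ p q, ∫ ω, f p ω * g q ω ∂P = 0 := by
    intro p q
    have := (hindpq p q).integral_mul_eq_mul_integral (hfInt p).1 (hgInt q).1
    calc ∫ ω, f p ω * g q ω ∂P = ∫ ω, (f p * g q) ω ∂P := by rfl
      _ = (∫ ω, f p ω ∂P) * ∫ ω, g q ω ∂P := this
      _ = 0 := by rw [hfmean, hgmean, mul_zero]
  -- mean of the new vector
  have happly : ∀ ω m, (W.mulVec (X ω) + ξ ω) m = (∑ p, W m p * X ω p) + ξ ω m := by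
    intro ω m
    simp [Matrix.mulVec, dotProduct]
  have hmean : ∀ m, (∫ ω, (W.mulVec (X ω) + ξ ω) m ∂P) = (∑ p, W m p * a p) + b m := by
    intro m
    rw [integral_congr_ae (Filter.Eventually.of_forall fun ω => happly ω m)]
    rw [integral_add (integrable_finset_sum _ fun p _ => (hXInt p).const_mul _) (hξInt m),
      integral_finset_sum _ fun p _ => (hXInt p).const_mul _]
    simp only [ha, hb]
    congr 1
    exact Finset.sum_congr rfl fun p _ => integral_const_mul _ _
  have hcenter : ∀ m ω, (W.mulVec (X ω) + ξ ω) m - ((∑ p, W m p * a p) + b m)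
      = (∑ p, W m p * f p ω) + g m ω := by
    intro m ω
    rw [happly ω m]
    have h1 : ∑ p, W m p * f p ω = (∑ p, W m p * X ω p) - ∑ p, W m p * a p := by
      rw [← Finset.sum_sub_distrib]
      exact Finset.sum_congr rfl fun p _ => by simp only [hfdef]; ring
    rw [h1]
    simp only [hgdef]
    ring
  -- ℒ² of the sums
  have hA2 : ∀ m, MemLp (fun ω => ∑ p, W m p * f p ω) 2 P := by
    intro m
    have h := memLp_finsetSum' (μ := P) (p := 2) Finset.univ
      (f := fun p (ω : Ω) => W m p * f p ω) (fun p _ => (hf2 p).const_mul (W m p))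
    convert h using 1
    funext ω
    simp
  -- main entrywise computation
  ext m n
  show (∫ ω, ((W.mulVec (X ω) + ξ ω) m - ∫ ω', (W.mulVec (X ω') + ξ ω') m ∂P)
      * ((W.mulVec (X ω) + ξ ω) n - ∫ ω', (W.mulVec (X ω') + ξ ω') n ∂P) ∂P) = _
  have hstep1 : (∫ ω, ((W.mulVec (X ω) + ξ ω) m - ∫ ω', (W.mulVec (X ω') + ξ ω') m ∂P)
      * ((W.mulVec (X ω) + ξ ω) n - ∫ ω', (W.mulVec (X ω') + ξ ω') n ∂P) ∂P)
      = ∫ ω, ((∑ p, W m p * f p ω) + g m ω) * ((∑ q, W n q * f q ω) + g n ω) ∂P := by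
    refine integral_congr_ae (Filter.Eventually.of_forall fun ω => ?_)
    simp only
    rw [hmean m, hmean n, hcenter m ω, hcenter n ω]
  rw [hstep1]
  -- expand the product
  have hptwise : ∀ ω, ((∑ p, W m p * f p ω) + g m ω) * ((∑ q, W n q * f q ω) + g n ω)
      = (∑ p, W m p * f p ω) * (∑ q, W n q * f q ω)
        + ((∑ p, W m p * f p ω) * g n ω
          + (g m ω * (∑ q, W n q * f q ω) + g m ω * g n ω)) := by
    intro ω; ring
  rw [integral_congr_ae (Filter.Eventually.of_forall hptwise)]
  have hIAC : Integrable (fun ω => (∑ p, W m p * f p ω) * (∑ q, W n q * f q ω)) P :=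
    stmt9_mulL2 (hA2 m) (hA2 n)
  have hIAD : Integrable (fun ω => (∑ p, W m p * f p ω) * g n ω) P :=
    stmt9_mulL2 (hA2 m) (hg2 n)
  have hIBC : Integrable (fun ω => g m ω * (∑ q, W n q * f q ω)) P :=
    stmt9_mulL2 (hg2 m) (hA2 n)
  have hIBD : Integrable (fun ω => g m ω * g n ω) P := stmt9_mulL2 (hg2 m) (hg2 n)
  have hIsum2 : Integrable (fun ω => (∑ p, W m p * f p ω) * g n ω
      + (g m ω * (∑ q, W n q * f q ω) + g m ω * g n ω)) P := hIAD.add (hIBC.add hIBD)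
  have hIsum3 : Integrable (fun ω => g m ω * (∑ q, W n q * f q ω) + g m ω * g n ω) P :=
    hIBC.add hIBD
  rw [integral_add hIAC hIsum2, integral_add hIAD hIsum3, integral_add hIBC hIBD]
  -- cross terms vanish
  have hAD : ∫ ω, (∑ p, W m p * f p ω) * g n ω ∂P = 0 := by
    have hpw : ∀ ω, (∑ p, W m p * f p ω) * g n ω = ∑ p, W m p * (f p ω * g n ω) := by
      intro ω; rw [Finset.sum_mul]; exact Finset.sum_congr rfl fun p _ => by ring
    rw [integral_congr_ae (Filter.Eventually.of_forall hpw),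
      integral_finset_sum _ fun p _ => ((stmt9_mulL2 (hf2 p) (hg2 n)).const_mul _)]
    refine Finset.sum_eq_zero fun p _ => ?_
    rw [integral_const_mul, hcross, mul_zero]
  have hBC : ∫ ω, g m ω * (∑ q, W n q * f q ω) ∂P = 0 := by
    have hpw : ∀ ω, g m ω * (∑ q, W n q * f q ω) = ∑ q, W n q * (f q ω * g m ω) := by
      intro ω; rw [Finset.mul_sum]; exact Finset.sum_congr rfl fun q _ => by ring
    rw [integral_congr_ae (Filter.Eventually.of_forall hpw),
      integral_finset_sum _ fun q _ => ((stmt9_mulL2 (hf2 q) (hg2 m)).const_mul _)]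
    refine Finset.sum_eq_zero fun q _ => ?_
    rw [integral_const_mul, hcross, mul_zero]
  rw [hAD, hBC]
  -- main term
  have hAC : ∫ ω, (∑ p, W m p * f p ω) * (∑ q, W n q * f q ω) ∂P
      = ∑ p, ∑ q, (W m p * W n q) * ∫ ω, f p ω * f q ω ∂P := by
    have hpw : ∀ ω, (∑ p, W m p * f p ω) * (∑ q, W n q * f q ω)
        = ∑ p, ∑ q, (W m p * W n q) * (f p ω * f q ω) := by
      intro ω
      rw [Finset.sum_mul_sum]
      exact Finset.sum_congr rfl fun p _ => Finset.sum_congr rfl fun q _ => by ring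
    rw [integral_congr_ae (Filter.Eventually.of_forall hpw),
      integral_finset_sum _ fun p _ => integrable_finset_sum _ fun q _ =>
        ((stmt9_mulL2 (hf2 p) (hf2 q)).const_mul _)]
    refine Finset.sum_congr rfl fun p _ => ?_
    rw [integral_finset_sum _ fun q _ => ((stmt9_mulL2 (hf2 p) (hf2 q)).const_mul _)]
    exact Finset.sum_congr rfl fun q _ => integral_const_mul _ _
  rw [hAC]
  -- identify with matrix entries
  have hcovX : ∀ p q, (∫ ω, f p ω * f q ω ∂P) = covMatrix P X p q := fun p q => rfl
  have hcovξ : (∫ ω, g m ω * g n ω ∂P) = covMatrix P ξ m n := rfl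
  rw [hcovξ]
  have hRHS : (W * covMatrix P X * Wᵀ) m n
      = ∑ p, ∑ q, (W m p * W n q) * covMatrix P X p q := by
    rw [Matrix.mul_apply]
    have hj : ∀ j, (W * covMatrix P X) m j * Wᵀ j n
        = ∑ p, (W m p * W n j) * covMatrix P X p j := by
      intro j
      rw [Matrix.mul_apply, Matrix.transpose_apply, Finset.sum_mul]
      exact Finset.sum_congr rfl fun p _ => by ring
    rw [Finset.sum_congr rfl fun j _ => hj j, Finset.sum_comm]
  rw [Matrix.add_apply, hRHS]
  simp only [hcovX]
  ring

/-- Per-sensor variance bound for noisy average consensus on a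
connected graph: with `W = I - α* L`, `γ₂ = (λ_N - λ₂)/(λ_N + λ₂)`,
`Cov(X₀) = (4μ²/σ²) I`, noise covariance `R = diag(φ₁², …, φ_N²)`,
`φ_max² = max_j φ_j²`, and `X_{i+1} = W X_i + n_i` with `X₀, n₀, n₁, …` mutually
independent, one has
`Var(X_n(i)) ≤ (4μ²/σ²)[1/N + γ₂^{2i}(1-1/N)] + φ_max²[i/N + ((1-γ₂^{2i})/(1-γ₂²))(1-1/N)]`. -/
theorem stmt9 (N : ℕ) (hN : 2 ≤ N) (G : SimpleGraph (Fin N)) [DecidableRel G.Adj]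
    (hconn : G.Connected) (l2 lN : ℝ)
    (hl2 : IsLeast {x : ℝ | x ∈ spectrum ℝ (G.lapMatrix ℝ) ∧ x ≠ 0} l2)
    (hlN : IsGreatest (spectrum ℝ (G.lapMatrix ℝ)) lN)
    (α γ₂ : ℝ) (hα : α = 2 / (l2 + lN)) (hγ₂ : γ₂ = (lN - l2) / (lN + l2))
    (W : Matrix (Fin N) (Fin N) ℝ) (hW : W = 1 - α • G.lapMatrix ℝ)
    (μ σ : ℝ) (hμ : 0 < μ) (hσ : 0 < σ)
    (φ : Fin N → ℝ) (R : Matrix (Fin N) (Fin N) ℝ)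
    (hR : R = Matrix.diagonal fun j => φ j ^ 2)
    (φmax2 : ℝ) (hφmax : IsGreatest (Set.range fun j => φ j ^ 2) φmax2)
    {Ω : Type*} [MeasurableSpace Ω] (P : Measure Ω) [IsProbabilityMeasure P]
    (X : ℕ → Ω → Fin N → ℝ) (noise : ℕ → Ω → Fin N → ℝ)
    (hX0meas : Measurable (X 0)) (hnoisemeas : ∀ i, Measurable (noise i))
    (hX0sq : ∀ n, MemLp (fun ω => X 0 ω n) 2 P)
    (hnoisesq : ∀ i n, MemLp (fun ω => noise i ω n) 2 P)
    (Z : ℕ → Ω → Fin N → ℝ) (hZ0 : Z 0 = X 0) (hZS : ∀ i, Z (i + 1) = noise i)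
    (hindep : iIndepFun (m := fun _ : ℕ => MeasurableSpace.pi) Z P)
    (hcovX0 : covMatrix P (X 0) = (4 * μ ^ 2 / σ ^ 2) • (1 : Matrix (Fin N) (Fin N) ℝ))
    (hcovnoise : ∀ i, covMatrix P (noise i) = R)
    (hrec : ∀ i ω, X (i + 1) ω = W.mulVec (X i ω) + noise i ω) :
    ∀ (i : ℕ) (n : Fin N),
      (∫ ω, (X i ω n - ∫ ω', X i ω' n ∂P) ^ 2 ∂P)
        ≤ (4 * μ ^ 2 / σ ^ 2) * (1 / (N : ℝ) + γ₂ ^ (2 * i) * (1 - 1 / (N : ℝ)))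
          + φmax2 * ((i : ℝ) / (N : ℝ)
            + (1 - γ₂ ^ (2 * i)) / (1 - γ₂ ^ 2) * (1 - 1 / (N : ℝ))) := by
  classical
  obtain ⟨hl2pos, hllN⟩ := stmt9_scalar N hN G hconn l2 lN hl2 hlN
  have hN2 : (2:ℝ) ≤ (N:ℝ) := by exact_mod_cast hN
  have hNpos : (0:ℝ) < N := by linarith
  have hγ0 : 0 ≤ γ₂ := by rw [hγ₂]; apply div_nonneg <;> linarith
  have hγ1 : γ₂ < 1 := by rw [hγ₂, div_lt_one (by linarith)]; linarith
  have hspec := stmt9_spectral N hN G hconn l2 lN hl2pos hllN hl2 hlN α γ₂ hα hγ₂ W hW hγ0 hγ1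
  -- measurability of the independent family
  have hZmeas : ∀ j, Measurable (Z j) := by
    intro j
    cases j with
    | zero => rwa [hZ0]
    | succ i => rw [hZS]; exact hnoisemeas i
  have hmulVecMeas : Measurable (fun v : Fin N → ℝ => W.mulVec v) := by
    apply measurable_pi_lambda
    intro n
    simp only [Matrix.mulVec, dotProduct]
    exact Finset.measurable_sum _ fun p _ => (measurable_pi_apply p).const_mul _
  -- square integrability of the iterates
  have hXsq : ∀ i n, MemLp (fun ω => X i ω n) 2 P := by
    intro i
    induction i with
    | zero => exact hX0sq
    | succ i ih =>
        intro n
        have he : (fun ω => X (i+1) ω n) = fun ω => (∑ p, W n p * X i ω p) + noise i ω n := by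
          funext ω
          rw [hrec i ω]
          simp [Matrix.mulVec, dotProduct]
        rw [he]
        have hsum : MemLp (fun ω => ∑ p, W n p * X i ω p) 2 P := by
          have h := memLp_finsetSum' (μ := P) (p := 2) Finset.univ
            (f := fun p (ω : Ω) => W n p * X i ω p) (fun p _ => (ih p).const_mul (W n p))
          convert h using 1
          funext ω
          simp
        exact hsum.add (hnoisesq i n)
  -- X i is a measurable function of Z 0, ..., Z i
  have hrep : ∀ i, ∃ g : ((Finset.range (i+1) : Finset ℕ) → Fin N → ℝ) → Fin N → ℝ,
      Measurable g ∧ ∀ ω, X i ω = g fun j => Z j ω := by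
    intro i
    induction i with
    | zero =>
        refine ⟨fun v => v ⟨0, by simp⟩, measurable_pi_apply _, fun ω => ?_⟩
        exact (congrFun hZ0 ω).symm
    | succ i ih =>
        obtain ⟨g, hgmeas, hgeq⟩ := ih
        have hsub : ∀ j : (Finset.range (i+1) : Finset ℕ), (j : ℕ) ∈ Finset.range (i+2) := by
          intro j
          have h := j.2
          simp only [Finset.mem_range] at h ⊢
          omega
        set r : ((Finset.range (i+2) : Finset ℕ) → Fin N → ℝ)
            → ((Finset.range (i+1) : Finset ℕ) → Fin N → ℝ) :=
          fun v j => v ⟨(j : ℕ), hsub j⟩ with hrdef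
        have hrmeas : Measurable r := measurable_pi_lambda _ fun j => measurable_pi_apply _
        refine ⟨fun v => W.mulVec (g (r v)) + v ⟨i+1, by simp⟩, ?_, ?_⟩
        · exact (hmulVecMeas.comp (hgmeas.comp hrmeas)).add (measurable_pi_apply _)
        · intro ω
          rw [hrec i ω, hgeq ω, ← hZS i]
  -- independence of X i and noise i
  have hindXn : ∀ i, IndepFun (X i) (noise i) P := by
    intro i
    obtain ⟨g, hgmeas, hgeq⟩ := hrep i
    have hdisj : Disjoint (Finset.range (i+1)) ({i+1} : Finset ℕ) := by
      simp
    have h := hindep.indepFun_finset (Finset.range (i+1)) {i+1} hdisj hZmeas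
    have h2 := h.comp hgmeas
      (measurable_pi_apply (⟨i+1, Finset.mem_singleton_self _⟩ : (({i+1} : Finset ℕ) : Type)))
    have e1 : (g ∘ fun ω (j : (Finset.range (i+1) : Finset ℕ)) => Z j ω) = X i :=
      funext fun ω => (hgeq ω).symm
    have e2 : ((fun v : ((({i+1} : Finset ℕ) : Type) → Fin N → ℝ)
          => v ⟨i+1, Finset.mem_singleton_self _⟩)
        ∘ fun ω (j : (({i+1} : Finset ℕ) : Type)) => Z j ω) = noise i := by
      funext ω
      show Z (i+1) ω = noise i ω
      rw [hZS i]
    rwa [e1, e2] at h2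
  -- covariance recursion and closed form
  have hcovrec : ∀ i, covMatrix P (X (i+1)) = W * covMatrix P (X i) * Wᵀ + R := by
    intro i
    have hXe : X (i+1) = fun ω => W.mulVec (X i ω) + noise i ω := funext fun ω => hrec i ω
    rw [hXe, stmt9_covstep P W (X i) (noise i) (hXsq i) (hnoisesq i) (hindXn i), hcovnoise i]
  set c : ℝ := 4 * μ ^ 2 / σ ^ 2 with hc
  have hWA : ∀ k : ℕ, W * (W ^ k * (W ^ k)ᵀ) * Wᵀ = W ^ (k+1) * (W ^ (k+1))ᵀ := by
    intro k
    have h1 : (W ^ (k+1))ᵀ = (W ^ k)ᵀ * Wᵀ := by rw [pow_succ', Matrix.transpose_mul]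
    rw [h1, pow_succ']
    simp only [Matrix.mul_assoc]
  have hWR : ∀ k : ℕ, W * (W ^ k * R * (W ^ k)ᵀ) * Wᵀ = W ^ (k+1) * R * (W ^ (k+1))ᵀ := by
    intro k
    have h1 : (W ^ (k+1))ᵀ = (W ^ k)ᵀ * Wᵀ := by rw [pow_succ', Matrix.transpose_mul]
    rw [h1, pow_succ']
    simp only [Matrix.mul_assoc]
  have hclosed : ∀ i, covMatrix P (X i)
      = c • (W ^ i * (W ^ i)ᵀ) + ∑ k ∈ Finset.range i, W ^ k * R * (W ^ k)ᵀ := by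
    intro i
    induction i with
    | zero => simpa using hcovX0
    | succ i ih =>
        rw [hcovrec i, ih]
        rw [Matrix.mul_add, Matrix.add_mul, Matrix.mul_smul, Matrix.smul_mul, hWA i]
        rw [Finset.mul_sum, Finset.sum_mul]
        have hs : ∑ k ∈ Finset.range i, W * (W ^ k * R * (W ^ k)ᵀ) * Wᵀ
            = ∑ k ∈ Finset.range i, W ^ (k+1) * R * (W ^ (k+1))ᵀ :=
          Finset.sum_congr rfl fun k _ => hWR k
        rw [hs, Finset.sum_range_succ']
        simp only [pow_zero, Matrix.transpose_one, Matrix.one_mul, Matrix.mul_one]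
        rw [add_assoc]
  -- final bound
  intro i n
  have hLHS : (∫ ω, (X i ω n - ∫ ω', X i ω' n ∂P) ^ 2 ∂P) = covMatrix P (X i) n n := by
    show _ = ∫ ω, (X i ω n - ∫ ω', X i ω' n ∂P) * (X i ω n - ∫ ω', X i ω' n ∂P) ∂P
    exact integral_congr_ae (Filter.Eventually.of_forall fun ω => pow_two _)
  rw [hLHS, hclosed i, Matrix.add_apply, Matrix.smul_apply, Matrix.sum_apply, smul_eq_mul]
  have hφnonneg : 0 ≤ φmax2 := by
    obtain ⟨j, hj⟩ := hφmax.1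
    rw [← hj]
    positivity
  have hφle : ∀ j, φ j ^ 2 ≤ φmax2 := fun j => hφmax.2 ⟨j, rfl⟩
  have hRk : ∀ k, (W ^ k * R * (W ^ k)ᵀ) n n
      ≤ φmax2 * (1 / (N:ℝ) + γ₂ ^ (2*k) * (1 - 1/(N:ℝ))) := by
    intro k
    have h1 : (W ^ k * R * (W ^ k)ᵀ) n n = ∑ j, (φ j ^ 2) * (W ^ k) n j ^ 2 := by
      rw [Matrix.mul_apply]
      refine Finset.sum_congr rfl fun j _ => ?_
      rw [Matrix.transpose_apply, hR, Matrix.mul_diagonal]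
      ring
    have h2 : (W ^ k * (W ^ k)ᵀ) n n = ∑ j, (W ^ k) n j ^ 2 := by
      rw [Matrix.mul_apply]
      refine Finset.sum_congr rfl fun j _ => ?_
      rw [Matrix.transpose_apply]
      ring
    have h3 : ∑ j, (φ j ^ 2) * (W ^ k) n j ^ 2 ≤ φmax2 * ∑ j, (W ^ k) n j ^ 2 := by
      rw [Finset.mul_sum]
      exact Finset.sum_le_sum fun j _ => mul_le_mul_of_nonneg_right (hφle j) (sq_nonneg _)
    calc (W ^ k * R * (W ^ k)ᵀ) n n = ∑ j, (φ j ^ 2) * (W ^ k) n j ^ 2 := h1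
      _ ≤ φmax2 * ∑ j, (W ^ k) n j ^ 2 := h3
      _ = φmax2 * (W ^ k * (W ^ k)ᵀ) n n := by rw [h2]
      _ ≤ φmax2 * (1 / (N:ℝ) + γ₂ ^ (2*k) * (1 - 1/(N:ℝ))) :=
          mul_le_mul_of_nonneg_left (hspec k n) hφnonneg
  have hcpos : 0 ≤ c := by rw [hc]; positivity
  have hγsq : γ₂ ^ 2 < 1 := by nlinarith
  have hγsqne : γ₂ ^ 2 ≠ 1 := ne_of_lt hγsq
  have hgeom : ∑ k ∈ Finset.range i, γ₂ ^ (2*k) = (1 - γ₂ ^ (2*i)) / (1 - γ₂ ^ 2) := by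
    have h1 : ∀ k, γ₂ ^ (2*k) = (γ₂^2) ^ k := fun k => by rw [pow_mul]
    rw [Finset.sum_congr rfl fun k _ => h1 k, geom_sum_eq hγsqne i]
    rw [h1 i, ← neg_div_neg_eq, neg_sub, neg_sub]
  have hsumbound : ∑ k ∈ Finset.range i, (W ^ k * R * (W ^ k)ᵀ) n n
      ≤ φmax2 * ((i:ℝ)/(N:ℝ) + (1 - γ₂^(2*i))/(1-γ₂^2) * (1 - 1/(N:ℝ))) := by
    calc ∑ k ∈ Finset.range i, (W ^ k * R * (W ^ k)ᵀ) n n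
        ≤ ∑ k ∈ Finset.range i, φmax2 * (1/(N:ℝ) + γ₂^(2*k) * (1 - 1/(N:ℝ))) :=
          Finset.sum_le_sum fun k _ => hRk k
      _ = φmax2 * ((i:ℝ)/(N:ℝ) + (1 - γ₂^(2*i))/(1-γ₂^2) * (1 - 1/(N:ℝ))) := by
          rw [← Finset.mul_sum]
          congr 1
          rw [Finset.sum_add_distrib, Finset.sum_const, Finset.card_range, nsmul_eq_mul,
            ← Finset.sum_mul, hgeom]
          ring
  have hmain : c * (W ^ i * (W ^ i)ᵀ) n n ≤ c * (1/(N:ℝ) + γ₂^(2*i) * (1 - 1/(N:ℝ))) :=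
    mul_le_mul_of_nonneg_left (hspec i n) hcpos
  exact add_le_add hmain hsumbound
end

section
/- Let G be a connected simple graph on N ≥ 2 vertices with Laplacian L, α* = 2/(λ₂(L) + λ_N(L)), W = I − α*L, and γ₂ = (λ_N(L) − λ₂(L))/(λ_N(L) + λ₂(L)). Let X₀ be a square-integrable random vector in ℝ^N with Cov(X₀) = (4μ²/σ²)·I, and define the noiseless consensus iteration X_i = W^i X₀. Then for every iteration i ≥ 0 and every coordinate n, Var(X_n(i)) ≤ (4μ²/σ²)·[1/N + γ₂^{2i}(1 − 1/N)]; in particular this upper bound converges to 4μ²/(Nσ²), the variance of the centralized (fusion-center) statistic, as i → ∞. -/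
open MeasureTheory Filter

open Matrix

lemma parseval (N : ℕ) (b : OrthonormalBasis (Fin N) ℝ (EuclideanSpace ℝ (Fin N)))
    (u : Fin N → ℝ) :
    ∑ m, (u m)^2 = ∑ j, (∑ m, b j m * u m)^2 := by
  let u' : EuclideanSpace ℝ (Fin N) := WithLp.toLp 2 u
  have h1 : ∑ m, (u m)^2 = (inner ℝ u' u' : ℝ) := by
    simp only [u', PiLp.inner_apply, Real.inner_apply, WithLp.ofLp_toLp, sq]
  have h2 : (inner ℝ u' u' : ℝ) = inner ℝ (b.repr u') (b.repr u') :=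
    (b.repr.inner_map_map u' u').symm
  have h3 : ∀ y : EuclideanSpace ℝ (Fin N), (inner ℝ y y : ℝ) = ∑ j, (y j)^2 := by
    intro y
    simp only [PiLp.inner_apply, Real.inner_apply, sq]
  have h4 : ∀ j, b.repr u' j = ∑ m, b j m * u m := by
    intro j
    rw [b.repr_apply_apply]
    simp [u', PiLp.inner_apply, RCLike.inner_apply, mul_comm]
  calc ∑ m, (u m)^2 = (inner ℝ u' u' : ℝ) := h1
    _ = (inner ℝ (b.repr u') (b.repr u') : ℝ) := h2
    _ = ∑ j, (b.repr u' j)^2 := h3 _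
    _ = ∑ j, (∑ m, b j m * u m)^2 :=
        Finset.sum_congr rfl fun j _ => congrArg (· ^ 2) (h4 j)

lemma contract_step (N : ℕ) (G : SimpleGraph (Fin N)) [DecidableRel G.Adj]
    (hconn : G.Connected) (l2 lN : ℝ)
    (hl2 : IsLeast {x : ℝ | x ∈ spectrum ℝ (G.lapMatrix ℝ) ∧ x ≠ 0} l2)
    (hlN : IsGreatest (spectrum ℝ (G.lapMatrix ℝ)) lN)
    (α γ₂ : ℝ) (hα : α = 2 / (l2 + lN)) (hγ₂ : γ₂ = (lN - l2) / (lN + l2))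
    (W : Matrix (Fin N) (Fin N) ℝ) (hW : W = 1 - α • G.lapMatrix ℝ)
    (v : Fin N → ℝ) (hv : ∑ m, v m = 0) :
    ∑ m, ((W *ᵥ v) m)^2 ≤ γ₂^2 * ∑ m, (v m)^2 := by
  have hPSD : (G.lapMatrix ℝ).PosSemidef := SimpleGraph.posSemidef_lapMatrix ℝ G
  have hH : (G.lapMatrix ℝ).IsHermitian := hPSD.1
  have hspec_nonneg : ∀ x ∈ spectrum ℝ (G.lapMatrix ℝ), 0 ≤ x := by
    intro x hx
    rw [hH.spectrum_real_eq_range_eigenvalues] at hx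
    obtain ⟨j, rfl⟩ := hx
    exact hPSD.eigenvalues_nonneg j
  have hl2pos : 0 < l2 := lt_of_le_of_ne (hspec_nonneg l2 hl2.1.1) (Ne.symm hl2.1.2)
  have hl2le : l2 ≤ lN := hlN.2 hl2.1.1
  have hs : 0 < l2 + lN := by linarith
  set b := hH.eigenvectorBasis with hb
  set lam := hH.eigenvalues with hlam
  have hWsymm : Wᵀ = W := by
    rw [hW]
    simp [transpose_smul, (G.isSymm_lapMatrix (R := ℝ)).eq]
  have hcoef : ∀ j, ∑ m, b j m * (W *ᵥ v) m
      = (1 - α * lam j) * ∑ m, b j m * v m := by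
    intro j
    have e1 : ∑ m, b j m * (W *ᵥ v) m = (⇑(b j)) ⬝ᵥ (W *ᵥ v) := rfl
    have e2 : (⇑(b j)) ⬝ᵥ (W *ᵥ v) = (W *ᵥ ⇑(b j)) ⬝ᵥ v := by
      rw [dotProduct_mulVec, ← hWsymm, vecMul_transpose, hWsymm]
    have e3 : W *ᵥ ⇑(b j) = (1 - α * lam j) • ⇑(b j) := by
      rw [hW, sub_mulVec, one_mulVec, smul_mulVec, hH.mulVec_eigenvectorBasis]
      ext m
      simp [Pi.smul_apply, smul_smul]
      ring
    rw [e1, e2, e3, smul_dotProduct]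
    rfl
  have hker : ∀ j, lam j = 0 → ∑ m, b j m * v m = 0 := by
    intro j hj
    obtain ⟨m0⟩ := hconn.nonempty
    have hzero : G.lapMatrix ℝ *ᵥ ⇑(b j) = 0 := by
      rw [hH.mulVec_eigenvectorBasis, ← hlam, hj, zero_smul]
    have hconst : ∀ m : Fin N, b j m = b j m0 := by
      intro m
      have := (G.lapMatrix_mulVec_eq_zero_iff_forall_reachable).mp hzero
      exact this m m0 (hconn.preconnected m m0)
    calc ∑ m, b j m * v m = ∑ m, b j m0 * v m :=
          Finset.sum_congr rfl fun m _ => by rw [hconst m]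
      _ = b j m0 * ∑ m, v m := by rw [Finset.mul_sum]
      _ = 0 := by rw [hv, mul_zero]
  have hbound : ∀ j, lam j ≠ 0 → (1 - α * lam j)^2 ≤ γ₂^2 := by
    intro j hj
    have hmem : lam j ∈ spectrum ℝ (G.lapMatrix ℝ) := hH.eigenvalues_mem_spectrum_real j
    have h1 : l2 ≤ lam j := hl2.2 ⟨hmem, hj⟩
    have h2 : lam j ≤ lN := hlN.2 hmem
    rw [hα, hγ₂]
    have e : 1 - 2 / (l2 + lN) * lam j = (l2 + lN - 2 * lam j) / (l2 + lN) := by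
      field_simp
    have e2 : (lN - l2) / (lN + l2) = (lN - l2) / (l2 + lN) := by ring_nf
    rw [e, e2, div_pow, div_pow]
    apply div_le_div_of_nonneg_right _ (by positivity)
    nlinarith [mul_nonneg (sub_nonneg.2 h1) (sub_nonneg.2 h2)]
  calc ∑ m, ((W *ᵥ v) m)^2 = ∑ j, (∑ m, b j m * (W *ᵥ v) m)^2 := parseval N b _
    _ = ∑ j, ((1 - α * lam j) * ∑ m, b j m * v m)^2 :=
        Finset.sum_congr rfl fun j _ => congrArg (· ^ 2) (hcoef j)
    _ ≤ ∑ j, γ₂^2 * (∑ m, b j m * v m)^2 := by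
        apply Finset.sum_le_sum
        intro j _
        by_cases hj : lam j = 0
        · rw [hker j hj]
          simp [mul_nonneg (sq_nonneg γ₂)]
        · rw [mul_pow]
          exact mul_le_mul_of_nonneg_right (hbound j hj) (sq_nonneg _)
    _ = γ₂^2 * ∑ j, (∑ m, b j m * v m)^2 := (Finset.mul_sum _ _ _).symm
    _ = γ₂^2 * ∑ m, (v m)^2 := by rw [← parseval N b v]
lemma l2_mul_int {Ω : Type*} [MeasurableSpace Ω] {P : MeasureTheory.Measure Ω}
    {f g : Ω → ℝ} (hf : MeasureTheory.MemLp f 2 P) (hg : MeasureTheory.MemLp g 2 P) :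
    MeasureTheory.Integrable (fun ω => f ω * g ω) P := by
  refine MeasureTheory.Integrable.mono' (hf.integrable_sq.add hg.integrable_sq)
    (hf.1.mul hg.1) (Filter.Eventually.of_forall fun ω => ?_)
  have : ‖f ω * g ω‖ = |f ω * g ω| := rfl
  rw [this, abs_mul]
  simp only [Pi.add_apply]
  nlinarith [sq_nonneg (|f ω| - |g ω|), abs_nonneg (f ω), abs_nonneg (g ω),
    sq_abs (f ω), sq_abs (g ω)]


/-- Per-sensor variance bound for noiseless average consensus on a
connected graph: with `W = I - α* L`, `γ₂ = (λ_N - λ₂)/(λ_N + λ₂)`,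
`Cov(X₀) = (4μ²/σ²) I`, and `X_i = W^i X₀`, one has
`Var(X_n(i)) ≤ (4μ²/σ²)[1/N + γ₂^{2i}(1 - 1/N)]`, and this upper bound converges,
as `i → ∞`, to `4μ²/(Nσ²)`, the variance of the centralized fusion-center statistic. -/
theorem stmt10 (N : ℕ) (hN : 2 ≤ N) (G : SimpleGraph (Fin N)) [DecidableRel G.Adj]
    (hconn : G.Connected) (l2 lN : ℝ)
    (hl2 : IsLeast {x : ℝ | x ∈ spectrum ℝ (G.lapMatrix ℝ) ∧ x ≠ 0} l2)
    (hlN : IsGreatest (spectrum ℝ (G.lapMatrix ℝ)) lN)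
    (α γ₂ : ℝ) (hα : α = 2 / (l2 + lN)) (hγ₂ : γ₂ = (lN - l2) / (lN + l2))
    (W : Matrix (Fin N) (Fin N) ℝ) (hW : W = 1 - α • G.lapMatrix ℝ)
    (μ σ : ℝ) (hμ : 0 < μ) (hσ : 0 < σ)
    {Ω : Type*} [MeasurableSpace Ω] (P : Measure Ω) [IsProbabilityMeasure P]
    (X0 : Ω → Fin N → ℝ) (hX0meas : Measurable X0)
    (hX0sq : ∀ n, MemLp (fun ω => X0 ω n) 2 P)
    (hcovX0 : (Matrix.of fun m n =>
        ∫ ω, (X0 ω m - ∫ ω', X0 ω' m ∂P) * (X0 ω n - ∫ ω', X0 ω' n ∂P) ∂P)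
      = (4 * μ ^ 2 / σ ^ 2) • (1 : Matrix (Fin N) (Fin N) ℝ))
    (X : ℕ → Ω → Fin N → ℝ) (hX : ∀ i ω, X i ω = (W ^ i).mulVec (X0 ω)) :
    (∀ (i : ℕ) (n : Fin N),
      (∫ ω, (X i ω n - ∫ ω', X i ω' n ∂P) ^ 2 ∂P)
        ≤ (4 * μ ^ 2 / σ ^ 2) * (1 / (N : ℝ) + γ₂ ^ (2 * i) * (1 - 1 / (N : ℝ)))) ∧
    Tendsto
      (fun i : ℕ =>
        (4 * μ ^ 2 / σ ^ 2) * (1 / (N : ℝ) + γ₂ ^ (2 * i) * (1 - 1 / (N : ℝ))))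
      atTop (nhds (4 * μ ^ 2 / ((N : ℝ) * σ ^ 2))) := by
  -- basic spectral facts
  have hPSD : (G.lapMatrix ℝ).PosSemidef := SimpleGraph.posSemidef_lapMatrix ℝ G
  have hH : (G.lapMatrix ℝ).IsHermitian := hPSD.1
  have hspec_nonneg : ∀ x ∈ spectrum ℝ (G.lapMatrix ℝ), 0 ≤ x := by
    intro x hx
    rw [hH.spectrum_real_eq_range_eigenvalues] at hx
    obtain ⟨j, rfl⟩ := hx
    exact hPSD.eigenvalues_nonneg j
  have hl2pos : 0 < l2 := lt_of_le_of_ne (hspec_nonneg l2 hl2.1.1) (Ne.symm hl2.1.2)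
  have hl2le : l2 ≤ lN := hlN.2 hl2.1.1
  have hs : (0:ℝ) < lN + l2 := by linarith
  have hγnn : 0 ≤ γ₂ := by rw [hγ₂]; apply div_nonneg <;> linarith
  have hγlt : γ₂ < 1 := by
    rw [hγ₂, div_lt_one hs]; linarith
  have hNpos : (0:ℝ) < (N:ℝ) := by
    have : (2:ℝ) ≤ (N:ℝ) := by exact_mod_cast hN
    linarith
  have hNne : (N:ℝ) ≠ 0 := ne_of_gt hNpos
  -- matrix facts
  have hWsymm : Wᵀ = W := by
    rw [hW]; simp [Matrix.transpose_smul, (G.isSymm_lapMatrix (R := ℝ)).eq]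
  have hW1 : W *ᵥ (fun _ => (1:ℝ)) = fun _ => 1 := by
    rw [hW, Matrix.sub_mulVec, Matrix.one_mulVec, Matrix.smul_mulVec,
      G.lapMatrix_mulVec_const_eq_zero, smul_zero, sub_zero]
  have hWi1 : ∀ i : ℕ, (W ^ i) *ᵥ (fun _ => (1:ℝ)) = fun _ => 1 := by
    intro i
    induction i with
    | zero => simp [Matrix.one_mulVec]
    | succ k ih =>
        rw [pow_succ', ← Matrix.mulVec_mulVec, ih, hW1]
  have hpres : ∀ v : Fin N → ℝ, ∑ m, v m = 0 → ∑ m, (W *ᵥ v) m = 0 := by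
    intro v hv
    have e1 : ∑ m, (W *ᵥ v) m = (fun _ => (1:ℝ)) ⬝ᵥ (W *ᵥ v) := by
      simp [dotProduct]
    have e2 : (fun _ => (1:ℝ)) ⬝ᵥ (W *ᵥ v) = (W *ᵥ fun _ => (1:ℝ)) ⬝ᵥ v := by
      rw [Matrix.dotProduct_mulVec, ← hWsymm, Matrix.vecMul_transpose, hWsymm]
    rw [e1, e2, hW1]
    simpa [dotProduct] using hv
  have hiter : ∀ (i : ℕ) (v : Fin N → ℝ), ∑ m, v m = 0 →
      ∑ m, ((W ^ i *ᵥ v) m)^2 ≤ (γ₂^2)^i * ∑ m, (v m)^2 ∧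
      ∑ m, (W ^ i *ᵥ v) m = 0 := by
    intro i
    induction i with
    | zero => intro v hv; simp [Matrix.one_mulVec, hv]
    | succ k ih =>
        intro v hv
        obtain ⟨ih1, ih2⟩ := ih v hv
        have hstep := contract_step N G hconn l2 lN hl2 hlN α γ₂ hα hγ₂ W hW
          (W ^ k *ᵥ v) ih2
        have hrw : W ^ (k+1) *ᵥ v = W *ᵥ (W ^ k *ᵥ v) := by
          rw [Matrix.mulVec_mulVec, ← pow_succ']
        constructor
        · rw [hrw]
          calc ∑ m, ((W *ᵥ (W ^ k *ᵥ v)) m)^2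
              ≤ γ₂^2 * ∑ m, ((W ^ k *ᵥ v) m)^2 := hstep
            _ ≤ γ₂^2 * ((γ₂^2)^k * ∑ m, (v m)^2) :=
                mul_le_mul_of_nonneg_left ih1 (sq_nonneg _)
            _ = (γ₂^2)^(k+1) * ∑ m, (v m)^2 := by ring
        · rw [hrw]
          exact hpres _ ih2
  -- row bound
  have hrowbound : ∀ (i : ℕ) (n : Fin N),
      ∑ m, ((W ^ i) n m)^2 ≤ 1/(N:ℝ) + (γ₂^2)^i * (1 - 1/(N:ℝ)) := by
    intro i n
    set e : Fin N → ℝ := fun m => if m = n then 1 else 0 with he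
    set v : Fin N → ℝ := fun m => e m - 1/(N:ℝ) with hv
    have hesum : ∑ m, e m = 1 := by
      simp [he, Finset.sum_ite_eq']
    have hvsum : ∑ m, v m = 0 := by
      rw [hv]
      simp only [Finset.sum_sub_distrib, hesum, Finset.sum_const, Finset.card_univ,
        Fintype.card_fin, nsmul_eq_mul]
      field_simp
      norm_num
    have hvsq : ∑ m, (v m)^2 = 1 - 1/(N:ℝ) := by
      have hterm : ∀ m, (v m)^2 = e m - 2/(N:ℝ) * e m + 1/(N:ℝ)^2 := by
        intro m
        by_cases h : m = n
        · simp only [hv, he, h, if_pos rfl]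
          field_simp
          rw [if_pos trivial]
          ring
        · simp only [hv, he, if_neg h]
          field_simp
          ring
      rw [Finset.sum_congr rfl fun m _ => hterm m]
      simp only [Finset.sum_add_distrib, Finset.sum_sub_distrib, ← Finset.mul_sum, hesum,
        Finset.sum_const, Finset.card_univ, Fintype.card_fin, nsmul_eq_mul]
      field_simp
      ring
    have hrow : ∀ m, (W ^ i) n m = (W ^ i *ᵥ v) m + 1/(N:ℝ) := by
      intro m
      have h1 : (W ^ i *ᵥ e) m = (W ^ i) m n := by
        simp [Matrix.mulVec, dotProduct, he, Finset.sum_ite_eq']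
      have hsymm : (W ^ i) m n = (W ^ i) n m := by
        have : (W ^ i)ᵀ = W ^ i := by
          rw [Matrix.transpose_pow, hWsymm]
        calc (W ^ i) m n = (W ^ i)ᵀ n m := rfl
          _ = (W ^ i) n m := by rw [this]
      have hdecomp : e = fun m => v m + 1/(N:ℝ) := by
        funext m; simp [hv]
      have h2 : (W ^ i *ᵥ e) m = (W ^ i *ᵥ v) m + 1/(N:ℝ) := by
        have hev : e = v + (fun _ => 1/(N:ℝ)) := by
          funext m'
          simp [hv]
        have : W ^ i *ᵥ e = W ^ i *ᵥ v + W ^ i *ᵥ (fun _ => 1/(N:ℝ)) := by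
          rw [hev, Matrix.mulVec_add]
        rw [this]
        have h3 : W ^ i *ᵥ (fun _ => 1/(N:ℝ)) = fun _ => 1/(N:ℝ) := by
          have : (fun _ : Fin N => 1/(N:ℝ)) = (1/(N:ℝ)) • (fun _ : Fin N => (1:ℝ)) := by
            funext m; simp
          rw [this, Matrix.mulVec_smul, hWi1]
        rw [h3]
        rfl
      rw [← hsymm, ← h1, h2]
    obtain ⟨hb1, hb2⟩ := hiter i v hvsum
    calc ∑ m, ((W ^ i) n m)^2 = ∑ m, ((W ^ i *ᵥ v) m + 1/(N:ℝ))^2 :=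
          Finset.sum_congr rfl fun m _ => by rw [hrow m]
      _ = ∑ m, (((W ^ i *ᵥ v) m)^2 + 2/(N:ℝ) * (W ^ i *ᵥ v) m + 1/(N:ℝ)^2) :=
          Finset.sum_congr rfl fun m _ => by ring
      _ = (∑ m, ((W ^ i *ᵥ v) m)^2) + 2/(N:ℝ) * (∑ m, (W ^ i *ᵥ v) m)
            + (N:ℝ) * (1/(N:ℝ)^2) := by
          simp only [Finset.sum_add_distrib, ← Finset.mul_sum, Finset.sum_const,
            Finset.card_univ, Fintype.card_fin, nsmul_eq_mul]
      _ = (∑ m, ((W ^ i *ᵥ v) m)^2) + 1/(N:ℝ) := by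
          rw [hb2]
          field_simp
          ring
      _ ≤ (γ₂^2)^i * (1 - 1/(N:ℝ)) + 1/(N:ℝ) := by
          have := hb1
          rw [hvsq] at this
          linarith
      _ = 1/(N:ℝ) + (γ₂^2)^i * (1 - 1/(N:ℝ)) := by ring
  constructor
  · -- variance bound
    intro i n
    set c : ℝ := 4 * μ ^ 2 / σ ^ 2 with hc
    have hcnn : 0 ≤ c := by positivity
    set a : Fin N → ℝ := fun m => (W ^ i) n m with ha
    set μv : Fin N → ℝ := fun m => ∫ ω, X0 ω m ∂P with hμv
    set Y : Fin N → Ω → ℝ := fun m ω => X0 ω m - μv m with hY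
    have hYL2 : ∀ m, MemLp (Y m) 2 P := fun m => (hX0sq m).sub (memLp_const _)
    have hX0int : ∀ m, Integrable (fun ω => X0 ω m) P :=
      fun m => (hX0sq m).integrable one_le_two
    have hYmul : ∀ m k, Integrable (fun ω => Y m ω * Y k ω) P :=
      fun m k => l2_mul_int (hYL2 m) (hYL2 k)
    have h1 : ∀ ω, X i ω n = ∑ m, a m * X0 ω m := by
      intro ω
      rw [hX i ω]
      simp [Matrix.mulVec, dotProduct, ha]
    have hmean : ∫ ω, X i ω n ∂P = ∑ m, a m * μv m := by
      rw [integral_congr_ae (Filter.Eventually.of_forall h1)]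
      rw [integral_finset_sum _ fun m _ => (hX0int m).const_mul (a m)]
      exact Finset.sum_congr rfl fun m _ => integral_const_mul _ _
    have h2 : ∀ ω, X i ω n - ∫ ω', X i ω' n ∂P = ∑ m, a m * Y m ω := by
      intro ω
      rw [h1 ω, hmean, ← Finset.sum_sub_distrib]
      exact Finset.sum_congr rfl fun m _ => by rw [hY]; ring
    have h3 : ∀ ω, (X i ω n - ∫ ω', X i ω' n ∂P)^2
        = ∑ m, ∑ k, (a m * a k) * (Y m ω * Y k ω) := by
      intro ω
      rw [h2 ω, sq, Finset.sum_mul_sum]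
      exact Finset.sum_congr rfl fun m _ => Finset.sum_congr rfl fun k _ => by ring
    have h5 : ∀ m k, ∫ ω, Y m ω * Y k ω ∂P = if m = k then c else 0 := by
      intro m k
      have := congrFun (congrFun hcovX0 m) k
      simp only [Matrix.of_apply, Matrix.smul_apply, Matrix.one_apply, smul_eq_mul] at this
      rw [hY, hμv]
      simp only []
      rw [this]
      by_cases h : m = k <;> simp [h]
    have h4 : ∫ ω, (X i ω n - ∫ ω', X i ω' n ∂P)^2 ∂P = c * ∑ m, (a m)^2 := by
      rw [integral_congr_ae (Filter.Eventually.of_forall h3)]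
      rw [integral_finset_sum _ fun m _ => integrable_finset_sum _
        fun k _ => ((hYmul m k).const_mul _)]
      have : ∀ m, ∫ ω, ∑ k, (a m * a k) * (Y m ω * Y k ω) ∂P
          = ∑ k, (a m * a k) * ∫ ω, Y m ω * Y k ω ∂P := by
        intro m
        rw [integral_finset_sum _ fun k _ => ((hYmul m k).const_mul _)]
        exact Finset.sum_congr rfl fun k _ => integral_const_mul _ _
      rw [Finset.sum_congr rfl fun m _ => this m]
      rw [Finset.mul_sum]
      refine Finset.sum_congr rfl fun m _ => ?_
      rw [Finset.sum_eq_single m]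
      · rw [h5 m m, if_pos rfl]; ring
      · intro k _ hk
        rw [h5 m k, if_neg (Ne.symm hk), mul_zero]
      · intro h; exact absurd (Finset.mem_univ m) h
    rw [h4]
    have : γ₂ ^ (2*i) = (γ₂^2)^i := by rw [pow_mul]
    rw [this]
    exact mul_le_mul_of_nonneg_left (hrowbound i n) hcnn
  · -- limit
    have hlim : Tendsto (fun i : ℕ => (γ₂^2)^i) atTop (nhds 0) := by
      apply tendsto_pow_atTop_nhds_zero_of_lt_one (sq_nonneg γ₂)
      nlinarith
    have h2 : Tendsto (fun i : ℕ => γ₂ ^ (2*i)) atTop (nhds 0) := by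
      simpa [pow_mul] using hlim
    have h3 : Tendsto
        (fun i : ℕ => (4 * μ ^ 2 / σ ^ 2) * (1 / (N : ℝ) + γ₂ ^ (2 * i) * (1 - 1 / (N : ℝ))))
        atTop (nhds ((4 * μ ^ 2 / σ ^ 2) * (1 / (N : ℝ) + 0 * (1 - 1 / (N : ℝ))))) :=
      (tendsto_const_nhds.add (h2.mul_const _)).const_mul _
    convert h3 using 2
    field_simp
    ring
end

section
/- (Alon–Boppana.) Fix an integer k ≥ 3. Let (G_m)_{m≥1} be a sequence of connected k-regular simple graphs whose numbers of vertices N_m tend to infinity, and for each m let λ_{G_m}(A) denote the largest absolute value of an eigenvalue of the adjacency matrix of G_m that is distinct from ±k. Then liminf_{m→∞} λ_{G_m}(A) ≥ 2√(k−1). -/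
open SimpleGraph

namespace AB

variable {V : Type*} {r : ℕ}

/-- Encode a labeled binary tree as a closed walk. -/
def enc (G : SimpleGraph V) (ch : V → V → Fin r → V)
    (hadj : ∀ x p a, G.Adj x (ch x p a)) : Tree (Fin r) → (x p : V) → G.Walk x x
  | BinaryTree.nil, _, _ => Walk.nil
  | BinaryTree.node a l t, x, p =>
      Walk.cons (hadj x p a)
        ((enc G ch hadj l (ch x p a) x).append
          (Walk.cons (hadj x p a).symm (enc G ch hadj t x p)))

variable {G : SimpleGraph V} {ch : V → V → Fin r → V}
  {hadj : ∀ x p a, G.Adj x (ch x p a)}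

lemma enc_length (t : Tree (Fin r)) (x p : V) :
    (enc G ch hadj t x p).length = 2 * t.numNodes := by
  induction t generalizing x p with
  | nil => simp [enc]
  | node a l s ihl ihs =>
    simp [enc, Walk.length_append, ihl, ihs, BinaryTree.numNodes]
    ring

lemma enc_support (t : Tree (Fin r)) (x p : V) :
    (enc G ch hadj t x p).support =
      x :: (enc G ch hadj t x p).support.tail :=
  Walk.support_eq_cons _

/-- tail of the support -/
def ts (G : SimpleGraph V) (ch : V → V → Fin r → V)
    (hadj : ∀ x p a, G.Adj x (ch x p a)) (t : Tree (Fin r)) (x p : V) : List V :=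
  (enc G ch hadj t x p).support.tail

lemma ts_nil (x p : V) : ts G ch hadj BinaryTree.nil x p = [] := rfl

lemma ts_node (a : Fin r) (l s : Tree (Fin r)) (x p : V) :
    ts G ch hadj (BinaryTree.node a l s) x p =
      ch x p a :: (ts G ch hadj l (ch x p a) x ++ x :: ts G ch hadj s x p) := by
  have h1 := enc_support (G := G) (ch := ch) (hadj := hadj) l (ch x p a) x
  have h2 := enc_support (G := G) (ch := ch) (hadj := hadj) s x p
  simp only [ts, enc, Walk.support_cons, Walk.support_append, List.tail_cons]
  rw [h1, h2]
  simp [ts]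
  rw [h1]; rfl

end AB

namespace AB
variable {V : Type*} {r : ℕ} {G : SimpleGraph V} {ch : V → V → Fin r → V}
  {hadj : ∀ x p a, G.Adj x (ch x p a)}

lemma enc_inj_aux (hne : ∀ x p a, ch x p a ≠ p) (hinj : ∀ x p, Function.Injective (ch x p)) :
    ∀ (l l' : Tree (Fin r)) (z x : V) (R1 R2 : List V),
    ts G ch hadj l z x ++ x :: R1 = ts G ch hadj l' z x ++ x :: R2 → l = l' ∧ R1 = R2 := by
  intro l
  induction l with
  | nil =>
    intro l' z x R1 R2 h
    cases l' with
    | nil => simpa [ts_nil] using h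
    | node a' l2 s2 =>
      rw [ts_nil, ts_node] at h
      simp only [List.nil_append, List.cons_append, List.cons.injEq] at h
      exact absurd h.1.symm (hne z x a')
  | node a l1 s1 ihl ihs =>
    intro l' z x R1 R2 h
    cases l' with
    | nil =>
      rw [ts_nil, ts_node] at h
      simp only [List.nil_append, List.cons_append, List.cons.injEq] at h
      exact absurd h.1 (hne z x a)
    | node a' l2 s2 =>
      rw [ts_node, ts_node] at h
      simp only [List.cons_append, List.cons.injEq] at h
      obtain ⟨hz, htail⟩ := h
      obtain rfl : a = a' := hinj z x hz
      rw [List.append_assoc, List.append_assoc, List.cons_append, List.cons_append] at htail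
      obtain ⟨rfl, htail2⟩ := ihl l2 (ch z x a) z _ _ htail
      obtain ⟨rfl, hR⟩ := ihs s2 z x R1 R2 htail2
      exact ⟨rfl, hR⟩

lemma enc_injective (hne : ∀ x p a, ch x p a ≠ p) (hinj : ∀ x p, Function.Injective (ch x p))
    (x p : V) : Function.Injective (fun t : Tree (Fin r) => enc G ch hadj t x p) := by
  intro t t' h
  have hs : ts G ch hadj t x p ++ p :: ([] : List V) = ts G ch hadj t' x p ++ p :: [] := by
    have := congrArg (fun w : G.Walk x x => w.support.tail) h
    simpa [ts] using congrArg (· ++ p :: ([] : List V)) this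
  exact (enc_inj_aux hne hinj t t' x p [] [] hs).1

end AB

namespace AB
variable {r : ℕ}

def labs : Tree (Fin r) → List (Fin r)
  | BinaryTree.nil => []
  | BinaryTree.node a s t => a :: (labs s ++ labs t)

def shape : Tree (Fin r) → Tree Unit
  | BinaryTree.nil => BinaryTree.nil
  | BinaryTree.node _ s t => BinaryTree.node () (shape s) (shape t)

def lab : Tree Unit → List (Fin r) → Tree (Fin r) × List (Fin r)
  | BinaryTree.nil, L => (BinaryTree.nil, L)
  | BinaryTree.node _ _ _, [] => (BinaryTree.nil, [])
  | BinaryTree.node _ s t, a :: L =>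
    let p := lab s L
    let q := lab t p.2
    (BinaryTree.node a p.1 q.1, q.2)

lemma labs_length : ∀ t : Tree (Fin r), (labs t).length = t.numNodes := by
  intro t
  induction t with
  | nil => rfl
  | node a s t ihs iht => simp [labs, BinaryTree.numNodes, ihs, iht]

lemma lab_spec : ∀ (u : Tree Unit) (L : List (Fin r)), u.numNodes ≤ L.length →
    shape (lab u L).1 = u ∧ labs (lab u L).1 ++ (lab u L).2 = L ∧
      (lab u L).1.numNodes = u.numNodes := by
  intro u
  induction u with
  | nil => intro L _; exact ⟨rfl, rfl, rfl⟩
  | node v s t ihs iht =>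
    intro L hL
    cases L with
    | nil => simp [BinaryTree.numNodes] at hL
    | cons a L' =>
      simp only [BinaryTree.numNodes, List.length_cons] at hL
      have hs : s.numNodes ≤ L'.length := by omega
      obtain ⟨hsh1, hlb1, hn1⟩ := ihs L' hs
      have hlen1 : (lab s L').2.length = L'.length - s.numNodes := by
        have := congrArg List.length hlb1
        simp [labs_length, hn1, Tree.numNodes] at this
        omega
      have ht : t.numNodes ≤ (lab s L').2.length := by omega
      obtain ⟨hsh2, hlb2, hn2⟩ := iht _ ht
      refine ⟨?_, ?_, ?_⟩
      · show BinaryTree.node () (shape (lab s L').1) (shape (lab t (lab s L').2).1) = _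
        rw [hsh1, hsh2]
      · show (a :: (labs (lab s L').1 ++ labs (lab t (lab s L').2).1)) ++ (lab t (lab s L').2).2
            = a :: L'
        rw [List.cons_append, List.append_assoc, hlb2, hlb1]
      · show (lab s L').1.numNodes + (lab t (lab s L').2).1.numNodes + 1 = (BinaryTree.node v s t).numNodes
        rw [hn1, hn2]; rfl

end AB

namespace AB
open Finset

variable {V : Type*} [Fintype V] [DecidableEq V] {G : SimpleGraph V} [DecidableRel G.Adj]

lemma exists_ch {k : ℕ} (hreg : G.IsRegularOfDegree k) :
    ∃ ch : V → V → Fin (k-1) → V, (∀ x p a, G.Adj x (ch x p a)) ∧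
      (∀ x p a, ch x p a ≠ p) ∧ (∀ x p, Function.Injective (ch x p)) := by
  have h : ∀ x p : V, ∃ f : Fin (k-1) → V,
      (∀ a, G.Adj x (f a)) ∧ (∀ a, f a ≠ p) ∧ Function.Injective f := by
    intro x p
    have hcard : k - 1 ≤ ((G.neighborFinset x).erase p).card := by
      have h1 := Finset.pred_card_le_card_erase (s := G.neighborFinset x) (a := p)
      rw [G.card_neighborFinset_eq_degree, hreg x] at h1
      exact h1
    obtain ⟨t, hts, htc⟩ := Finset.exists_subset_card_eq hcard
    refine ⟨fun a => (t.equivFin.symm (Fin.cast htc.symm a) : V), ?_, ?_, ?_⟩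
    · intro a
      have := hts (t.equivFin.symm (Fin.cast htc.symm a)).2
      rw [Finset.mem_erase, SimpleGraph.mem_neighborFinset] at this
      exact this.2
    · intro a
      have := hts (t.equivFin.symm (Fin.cast htc.symm a)).2
      rw [Finset.mem_erase] at this
      exact this.1
    · intro a b hab
      have := t.equivFin.symm.injective (Subtype.ext hab)
      simpa [Fin.ext_iff] using congrArg Fin.val this
  choose ch h1 h2 h3 using fun x => h x
  exact ⟨ch, fun x p a => h1 x p a, fun x p a => h2 x p a, fun x p => h3 x p⟩

lemma card_walk_ge {k : ℕ} (hreg : G.IsRegularOfDegree k) (x : V) (n : ℕ) :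
    catalan n * (k-1)^n ≤ Fintype.card {w : G.Walk x x | w.length = 2*n} := by
  obtain ⟨ch, hadj, hne, hinj⟩ := exists_ch hreg
  have hg : Function.Injective
      (fun q : ({u : Tree Unit // u ∈ BinaryTree.treesOfNumNodesEq n} × (Fin n → Fin (k-1))) =>
        enc G ch hadj (lab q.1.1 (List.ofFn q.2)).1 x x) := by
    rintro ⟨⟨u, hu⟩, f⟩ ⟨⟨u', hu'⟩, f'⟩ heq
    dsimp only at heq
    have htr := enc_injective hne hinj x x heq
    have hn : u.numNodes = n := BinaryTree.mem_treesOfNumNodesEq.1 hu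
    have hn' : u'.numNodes = n := BinaryTree.mem_treesOfNumNodesEq.1 hu'
    have hle : u.numNodes ≤ (List.ofFn f).length := by simp [hn]
    have hle' : u'.numNodes ≤ (List.ofFn f').length := by simp [hn']
    obtain ⟨hs1, hl1, hm1⟩ := lab_spec u (List.ofFn f) hle
    obtain ⟨hs1', hl1', hm1'⟩ := lab_spec u' (List.ofFn f') hle'
    have huu : u = u' := by rw [← hs1, ← hs1', htr]
    have hrem : (lab u (List.ofFn f)).2 = [] := by
      have hlen := congrArg List.length hl1
      simp [labs_length, hm1, hn] at hlen
      exact hlen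
    have hrem' : (lab u' (List.ofFn f')).2 = [] := by
      have hlen := congrArg List.length hl1'
      simp [labs_length, hm1', hn'] at hlen
      exact hlen
    have hL : List.ofFn f = List.ofFn f' := by
      rw [hrem] at hl1; rw [hrem'] at hl1'
      simp only [List.append_nil] at hl1 hl1'
      rw [← hl1, ← hl1', htr]
    have hf : f = f' := List.ofFn_injective hL
    subst huu hf
    rfl
  have hlen : ∀ q : ({u : Tree Unit // u ∈ BinaryTree.treesOfNumNodesEq n} × (Fin n → Fin (k-1))),
      (enc G ch hadj (lab q.1.1 (List.ofFn q.2)).1 x x).length = 2*n := by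
    intro q
    have hn : q.1.1.numNodes = n := BinaryTree.mem_treesOfNumNodesEq.1 q.1.2
    have hle : q.1.1.numNodes ≤ (List.ofFn q.2).length := by simp [hn]
    rw [enc_length, (lab_spec q.1.1 _ hle).2.2, hn]
  calc catalan n * (k-1)^n
      = Fintype.card ({u : Tree Unit // u ∈ BinaryTree.treesOfNumNodesEq n} × (Fin n → Fin (k-1))) := by
        simp [Fintype.card_fun, BinaryTree.treesOfNumNodesEq_card_eq_catalan]
    _ ≤ _ := Fintype.card_le_of_injective
        (fun q => ⟨enc G ch hadj (lab q.1.1 (List.ofFn q.2)).1 x x, hlen q⟩)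
        (fun a b h => hg (congrArg Subtype.val h))

end AB

section P2
open SimpleGraph Finset Matrix
namespace AB

variable {n' : Type*} [Fintype n'] [DecidableEq n']

lemma trace_pow {A : Matrix n' n' ℝ} (hA : A.IsHermitian) (p : ℕ) :
    (A ^ p).trace = ∑ i, hA.eigenvalues i ^ p := by
  have h1 : (star (hA.eigenvectorUnitary : Matrix n' n' ℝ)) * hA.eigenvectorUnitary = 1 :=
    mem_unitaryGroup_iff'.1 hA.eigenvectorUnitary.2
  have h2 : (hA.eigenvectorUnitary : Matrix n' n' ℝ) * star (hA.eigenvectorUnitary : Matrix n' n' ℝ) = 1 :=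
    mem_unitaryGroup_iff.1 hA.eigenvectorUnitary.2
  set U : Matrix n' n' ℝ := (hA.eigenvectorUnitary : Matrix n' n' ℝ) with hUdef
  set D : Matrix n' n' ℝ := Matrix.diagonal (RCLike.ofReal ∘ hA.eigenvalues) with hDdef
  have hpow : A ^ p = U * D ^ p * star U := by
    induction p with
    | zero => simpa using h2.symm
    | succ q ih =>
      calc A ^ (q+1) = A ^ q * A := pow_succ A q
        _ = (U * D ^ q * star U) * (U * D * star U) := by rw [ih]; (conv_lhs => rw [hA.spectral_theorem]); rfl
        _ = U * D ^ q * (star U * U) * (D * star U) := by noncomm_ring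
        _ = U * (D ^ q * D) * star U := by rw [h1]; noncomm_ring
        _ = U * D ^ (q+1) * star U := by rw [← pow_succ]
  rw [hpow, Matrix.trace_mul_cycle, h1, Matrix.one_mul, hDdef,
    Matrix.diagonal_pow, Matrix.trace_diagonal]
  simp

end AB

namespace AB
variable {V : Type*} [Fintype V] [DecidableEq V]

lemma exists_eigvec {A : Matrix V V ℝ} {μ : ℝ} (h : μ ∈ spectrum ℝ A) :
    ∃ v : V → ℝ, v ≠ 0 ∧ A *ᵥ v = μ • v := by
  have hnu := spectrum.mem_iff.1 h
  have halg : algebraMap ℝ (Matrix V V ℝ) μ = μ • (1 : Matrix V V ℝ) :=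
    Algebra.algebraMap_eq_smul_one μ
  rw [halg, Matrix.isUnit_iff_isUnit_det, isUnit_iff_ne_zero, not_not] at hnu
  obtain ⟨v, hv0, hv⟩ := Matrix.exists_mulVec_eq_zero_iff.2 hnu
  refine ⟨v, hv0, ?_⟩
  rw [Matrix.sub_mulVec, Matrix.smul_mulVec, Matrix.one_mulVec, sub_eq_zero] at hv
  exact hv.symm

lemma all_eq_of_sum_eq {s : Finset V} {g : V → ℝ} {c : ℝ} (hle : ∀ i ∈ s, g i ≤ c)
    (hsum : (s.card : ℝ) * c ≤ ∑ i ∈ s, g i) : ∀ i ∈ s, g i = c := by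
  by_contra hcon
  push_neg at hcon
  obtain ⟨i0, hi0s, hi0⟩ := hcon
  have hlt : ∑ i ∈ s, g i < ∑ i ∈ s, c :=
    Finset.sum_lt_sum hle ⟨i0, hi0s, lt_of_le_of_ne (hle i0 hi0s) hi0⟩
  rw [Finset.sum_const, nsmul_eq_mul] at hlt
  linarith

variable {G : SimpleGraph V} [DecidableRel G.Adj] {k : ℕ}

lemma spec_abs_le (hreg : G.IsRegularOfDegree k) {μ : ℝ}
    (h : μ ∈ spectrum ℝ (G.adjMatrix ℝ)) : |μ| ≤ k := by
  obtain ⟨v, hv0, hv⟩ := exists_eigvec h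
  obtain ⟨a, ha⟩ := Function.ne_iff.1 hv0
  obtain ⟨v0, -, hmax⟩ := Finset.exists_max_image Finset.univ (fun i => |v i|)
    ⟨a, Finset.mem_univ a⟩
  have hpos : 0 < |v v0| := lt_of_lt_of_le (abs_pos.2 ha) (hmax a (Finset.mem_univ a))
  have h1 : |μ| * |v v0| ≤ (k : ℝ) * |v v0| := by
    have h2 : (G.adjMatrix ℝ *ᵥ v) v0 = μ * v v0 := by rw [hv]; simp
    calc |μ| * |v v0| = |(G.adjMatrix ℝ *ᵥ v) v0| := by rw [h2, abs_mul]
      _ = |∑ u ∈ G.neighborFinset v0, v u| := by rw [adjMatrix_mulVec_apply]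
      _ ≤ ∑ u ∈ G.neighborFinset v0, |v u| := Finset.abs_sum_le_sum_abs _ _
      _ ≤ ∑ _u ∈ G.neighborFinset v0, |v v0| :=
          Finset.sum_le_sum fun u _ => hmax u (Finset.mem_univ u)
      _ = (k : ℝ) * |v v0| := by
          rw [Finset.sum_const, nsmul_eq_mul, G.card_neighborFinset_eq_degree, hreg v0]
  exact le_of_mul_le_mul_right h1 hpos

lemma eig_k_const (hconn : G.Connected) (hreg : G.IsRegularOfDegree k) {f : V → ℝ}
    (hf : G.adjMatrix ℝ *ᵥ f = (k : ℝ) • f) : ∀ v w, f v = f w := by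
  have hne : Nonempty V := hconn.nonempty
  obtain ⟨v0, -, hmax⟩ := Finset.exists_max_image Finset.univ f ⟨Classical.arbitrary V, Finset.mem_univ _⟩
  have key : ∀ v, f v = f v0 → ∀ u ∈ G.neighborFinset v, f u = f v0 := by
    intro v hfv
    apply all_eq_of_sum_eq (fun u _ => hmax u (Finset.mem_univ u))
    rw [G.card_neighborFinset_eq_degree, hreg v, ← adjMatrix_mulVec_apply, hf]
    simp [hfv]
  have hw : ∀ u w, (G.Walk u w) → f u = f v0 → f w = f v0 := by
    intro u w p
    induction p with
    | nil => exact id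
    | cons h' q ih =>
      intro hu
      exact ih (key _ hu _ ((SimpleGraph.mem_neighborFinset _ _ _).2 h'))
  intro v w
  obtain ⟨p⟩ := hconn v0 v
  obtain ⟨q⟩ := hconn v0 w
  rw [hw _ _ p rfl, hw _ _ q rfl]

lemma const_of_adj (hconn : G.Connected) {f : V → ℝ} (h : ∀ v u, G.Adj v u → f u = f v) :
    ∀ v w, f v = f w := by
  have hw : ∀ u w, (G.Walk u w) → f w = f u := by
    intro u w p
    induction p with
    | nil => rfl
    | cons h' q ih => rw [ih, h _ _ h']
  intro v w
  obtain ⟨p⟩ := hconn v w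
  exact (hw _ _ p).symm

lemma eig_negk (hconn : G.Connected) (hreg : G.IsRegularOfDegree k) {f : V → ℝ}
    (hf : G.adjMatrix ℝ *ᵥ f = (-(k : ℝ)) • f) :
    (∀ v w, |f v| = |f w|) ∧ (∀ v u, G.Adj v u → f u = - f v) := by
  set y : V → ℝ := fun v => |f v| with hy
  have h1 : ∀ v, (k : ℝ) * y v ≤ (G.adjMatrix ℝ *ᵥ y) v := by
    intro v
    have h2 : (G.adjMatrix ℝ *ᵥ f) v = -(k : ℝ) * f v := by rw [hf]; simp
    calc (k : ℝ) * y v = |(-(k : ℝ)) * f v| := by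
          rw [abs_mul, abs_neg, Nat.abs_cast]
      _ = |∑ u ∈ G.neighborFinset v, f u| := by rw [← adjMatrix_mulVec_apply, h2, neg_mul]
      _ ≤ ∑ u ∈ G.neighborFinset v, |f u| := Finset.abs_sum_le_sum_abs _ _
      _ = (G.adjMatrix ℝ *ᵥ y) v := (adjMatrix_mulVec_apply _ _ _).symm
  have hcol : ∀ u : V, ∑ v, (G.adjMatrix ℝ) v u = (k : ℝ) := by
    intro u
    have : ∀ v, (G.adjMatrix ℝ) v u = (G.adjMatrix ℝ) u v := by
      intro v; simp [SimpleGraph.adjMatrix_apply, G.adj_comm]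
    rw [Finset.sum_congr rfl fun v _ => this v]
    have h3 := adjMatrix_mulVec_const_apply_of_regular (α := ℝ) (a := (1:ℝ)) hreg (v := u)
    simp only [Matrix.mulVec, dotProduct, Function.const_apply, mul_one] at h3; exact h3
  have hswap : ∑ v, (G.adjMatrix ℝ *ᵥ y) v = ∑ v, (k : ℝ) * y v := by
    simp only [Matrix.mulVec, dotProduct]
    rw [Finset.sum_comm]
    exact Finset.sum_congr rfl fun u _ => by rw [← Finset.sum_mul, hcol u]
  have hpt : ∀ v, (G.adjMatrix ℝ *ᵥ y) v = (k : ℝ) * y v := by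
    have hnn : ∀ v ∈ Finset.univ, 0 ≤ (G.adjMatrix ℝ *ᵥ y) v - (k : ℝ) * y v :=
      fun v _ => by linarith [h1 v]
    have hzero : ∑ v, ((G.adjMatrix ℝ *ᵥ y) v - (k : ℝ) * y v) = 0 := by
      rw [Finset.sum_sub_distrib, hswap, sub_self]
    intro v
    have := (Finset.sum_eq_zero_iff_of_nonneg hnn).1 hzero v (Finset.mem_univ v)
    linarith
  have hyeig : G.adjMatrix ℝ *ᵥ y = (k : ℝ) • y := by
    funext v; rw [hpt v]; simp [mul_comm]
  have hyconst := eig_k_const hconn hreg hyeig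
  refine ⟨fun v w => hyconst v w, ?_⟩
  intro v u hadj
  have hsf : ∑ w ∈ G.neighborFinset v, f w = -(k:ℝ) * f v := by
    rw [← adjMatrix_mulVec_apply, hf]; simp
  rcases le_or_gt 0 (f v) with hpos | hneg
  · have hfv : f v = y v := (abs_of_nonneg hpos).symm
    have := all_eq_of_sum_eq (s := G.neighborFinset v) (g := fun w => - f w) (c := y v)
      (fun w _ => by
        calc - f w ≤ |f w| := neg_le_abs _
          _ = y v := hyconst w v)
      (by
        rw [Finset.sum_neg_distrib, hsf, G.card_neighborFinset_eq_degree, hreg v]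
        rw [← hfv]; ring_nf; exact le_refl _)
    have h4 := this u ((SimpleGraph.mem_neighborFinset _ _ _).2 hadj)
    rw [← hfv] at h4
    linarith
  · have hfv : f v = - y v := by
      rw [hy]; simp only; rw [abs_of_neg hneg, neg_neg]
    have := all_eq_of_sum_eq (s := G.neighborFinset v) (g := f) (c := y v)
      (fun w _ => by
        calc f w ≤ |f w| := le_abs_self _
          _ = y v := hyconst w v)
      (by
        rw [hsf, G.card_neighborFinset_eq_degree, hreg v]
        have : -(k:ℝ) * f v = (k:ℝ) * y v := by rw [hfv]; ring
        rw [this])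
    have h4 := this u ((SimpleGraph.mem_neighborFinset _ _ _).2 hadj)
    rw [hfv]
    linarith

end AB

namespace AB
variable {V : Type*} [Fintype V] [DecidableEq V]
variable {G : SimpleGraph V} [DecidableRel G.Adj] {k : ℕ}

lemma card_eigs (hconn : G.Connected) (hreg : G.IsRegularOfDegree k)
    (hA : (G.adjMatrix ℝ).IsHermitian) :
    (Finset.univ.filter fun i => |hA.eigenvalues i| = (k:ℝ)).card ≤ 2 := by
  classical
  set b := hA.eigenvectorBasis with hb
  have hNpos : 0 < Fintype.card V := Fintype.card_pos_iff.2 hconn.nonempty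
  have hinner : ∀ i j : V, (inner ℝ (b i) (b j) : ℝ) = ∑ v, b i v * b j v := by
    intro i j
    simp [PiLp.inner_apply, RCLike.inner_apply]
    exact Finset.sum_congr rfl fun _ _ => mul_comm _ _
  have hnorm : ∀ i : V, ∑ v, b i v * b i v = 1 := by
    intro i
    have h1 : (inner ℝ (b i) (b i) : ℝ) = 1 := by
      rw [real_inner_self_eq_norm_sq, hb, hA.eigenvectorBasis.orthonormal.1 i, one_pow]
    rw [← hinner, h1]
  have horth : ∀ i j : V, i ≠ j → ∑ v, b i v * b j v = 0 := by
    intro i j hij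
    rw [← hinner]
    exact hA.eigenvectorBasis.orthonormal.2 hij
  have hnotall : ∀ i : V, ¬ (∀ v, b i v = 0) := by
    intro i h
    have h2 := hnorm i
    have h3 : ∑ v, b i v * b i v = 0 := Finset.sum_eq_zero fun v _ => by rw [h v, zero_mul]
    rw [h3] at h2
    norm_num at h2
  have hprod : ∀ i j : V, i ≠ j → (∀ v w : V, b i v * b j v = b i w * b j w) →
      (∀ v w : V, |b i v| = |b i w|) → (∀ v w : V, |b j v| = |b j w|) → False := by
    intro i j hij hconst habsi habsj
    obtain ⟨v0⟩ := hconn.nonempty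
    have hsum : ∑ v, b i v * b j v = (Fintype.card V : ℝ) * (b i v0 * b j v0) := by
      rw [Finset.sum_congr rfl (fun v _ => hconst v v0), Finset.sum_const, nsmul_eq_mul]
      rfl
    rw [horth i j hij] at hsum
    have hz : b i v0 * b j v0 = 0 := by
      rcases mul_eq_zero.1 hsum.symm with h | h
      · exact absurd h (Nat.cast_ne_zero.2 hNpos.ne')
      · exact h
    rcases mul_eq_zero.1 hz with hz1 | hz1
    · exact hnotall i fun v => abs_eq_zero.1 (by rw [habsi v v0, hz1, abs_zero])
    · exact hnotall j fun v => abs_eq_zero.1 (by rw [habsj v v0, hz1, abs_zero])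
  have key1 : (Finset.univ.filter fun i => hA.eigenvalues i = (k:ℝ)).card ≤ 1 := by
    refine Finset.card_le_one.2 fun i hi j hj => ?_
    by_contra hij
    have hxi : G.adjMatrix ℝ *ᵥ ⇑(b i) = (k:ℝ) • ⇑(b i) := by
      rw [hb, hA.mulVec_eigenvectorBasis, (Finset.mem_filter.1 hi).2]
    have hxj : G.adjMatrix ℝ *ᵥ ⇑(b j) = (k:ℝ) • ⇑(b j) := by
      rw [hb, hA.mulVec_eigenvectorBasis, (Finset.mem_filter.1 hj).2]
    have hci : ∀ v w : V, b i v = b i w := fun v w => eig_k_const hconn hreg hxi v w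
    have hcj : ∀ v w : V, b j v = b j w := fun v w => eig_k_const hconn hreg hxj v w
    exact hprod i j hij (fun v w => by rw [hci v w, hcj v w])
      (fun v w => by rw [hci v w]) (fun v w => by rw [hcj v w])
  have key2 : (Finset.univ.filter fun i => hA.eigenvalues i = -(k:ℝ)).card ≤ 1 := by
    refine Finset.card_le_one.2 fun i hi j hj => ?_
    by_contra hij
    have hxi : G.adjMatrix ℝ *ᵥ ⇑(b i) = (-(k:ℝ)) • ⇑(b i) := by
      rw [hb, hA.mulVec_eigenvectorBasis, (Finset.mem_filter.1 hi).2]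
    have hxj : G.adjMatrix ℝ *ᵥ ⇑(b j) = (-(k:ℝ)) • ⇑(b j) := by
      rw [hb, hA.mulVec_eigenvectorBasis, (Finset.mem_filter.1 hj).2]
    obtain ⟨habsi', hflipi'⟩ := eig_negk hconn hreg hxi
    obtain ⟨habsj', hflipj'⟩ := eig_negk hconn hreg hxj
    have habsi : ∀ v w : V, |b i v| = |b i w| := fun v w => habsi' v w
    have habsj : ∀ v w : V, |b j v| = |b j w| := fun v w => habsj' v w
    have hflipi : ∀ v u : V, G.Adj v u → b i u = - b i v := fun v u h => hflipi' v u h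
    have hflipj : ∀ v u : V, G.Adj v u → b j u = - b j v := fun v u h => hflipj' v u h
    have hconst := const_of_adj hconn (f := fun v => b i v * b j v)
      (fun v u h => by simp only; rw [hflipi v u h, hflipj v u h]; ring)
    exact hprod i j hij (fun v w => hconst v w) habsi habsj
  have hsub : (Finset.univ.filter fun i => |hA.eigenvalues i| = (k:ℝ)) ⊆
      (Finset.univ.filter fun i => hA.eigenvalues i = (k:ℝ)) ∪
      (Finset.univ.filter fun i => hA.eigenvalues i = -(k:ℝ)) := by
    intro i hi
    have h2 := (Finset.mem_filter.1 hi).2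
    rw [abs_eq (by positivity : (0:ℝ) ≤ (k:ℝ))] at h2
    rcases h2 with h2 | h2 <;> simp [Finset.mem_union, Finset.mem_filter, h2]
  calc (Finset.univ.filter fun i => |hA.eigenvalues i| = (k:ℝ)).card
      ≤ _ := Finset.card_le_card hsub
    _ ≤ _ + _ := Finset.card_union_le _ _
    _ ≤ 2 := by omega

end AB

end P2

section P3
open SimpleGraph Finset Matrix
namespace AB
variable {V : Type*} [Fintype V] [DecidableEq V]
variable {G : SimpleGraph V} [DecidableRel G.Adj] {k : ℕ}

lemma adjH (G : SimpleGraph V) [DecidableRel G.Adj] : (G.adjMatrix ℝ).IsHermitian := by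
  show _ᴴ = _
  ext i j
  simp [Matrix.conjTranspose_apply, SimpleGraph.adjMatrix_apply, G.adj_comm]

lemma key_bound (hk : 3 ≤ k) (hconn : G.Connected) (hreg : G.IsRegularOfDegree k) {lam : ℝ}
    (hlam : IsGreatest
      ((fun x : ℝ => |x|) '' {x : ℝ | x ∈ spectrum ℝ (G.adjMatrix ℝ) ∧ |x| ≠ (k : ℝ)})
      lam) (l : ℕ) :
    (Fintype.card V : ℝ) * (catalan l * ((k:ℝ)-1)^l) ≤
      2*(k:ℝ)^(2*l) + (Fintype.card V : ℝ) * lam^(2*l) := by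
  classical
  have hA := adjH G
  have hlam0 : 0 ≤ lam := by
    obtain ⟨x, -, rfl⟩ := hlam.1
    exact abs_nonneg x
  -- lower bound on trace
  have hdiag : ∀ v : V, (catalan l : ℝ) * ((k:ℝ)-1)^l ≤ (G.adjMatrix ℝ ^ (2*l)) v v := by
    intro v
    rw [adjMatrix_pow_apply_eq_card_walk]
    have hcast : ((catalan l * (k-1)^l : ℕ) : ℝ) = (catalan l : ℝ) * ((k:ℝ)-1)^l := by
      rw [Nat.cast_mul, Nat.cast_pow, Nat.cast_sub (by omega : 1 ≤ k), Nat.cast_one]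
    rw [← hcast]
    exact_mod_cast card_walk_ge hreg v l
  have h1 : (Fintype.card V : ℝ) * ((catalan l : ℝ) * ((k:ℝ)-1)^l) ≤ (G.adjMatrix ℝ ^ (2*l)).trace := by
    have : (G.adjMatrix ℝ ^ (2*l)).trace = ∑ v, (G.adjMatrix ℝ ^ (2*l)) v v := rfl
    rw [this]
    calc (Fintype.card V : ℝ) * ((catalan l : ℝ) * ((k:ℝ)-1)^l)
        = ∑ _v : V, (catalan l : ℝ) * ((k:ℝ)-1)^l := by
          rw [Finset.sum_const, nsmul_eq_mul, Finset.card_univ]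
      _ ≤ _ := Finset.sum_le_sum fun v _ => hdiag v
  -- upper bound on trace
  have h2 : (G.adjMatrix ℝ ^ (2*l)).trace ≤ 2*(k:ℝ)^(2*l) + (Fintype.card V : ℝ) * lam^(2*l) := by
    rw [trace_pow hA (2*l)]
    rw [← Finset.sum_filter_add_sum_filter_not Finset.univ (fun i => |hA.eigenvalues i| = (k:ℝ))]
    have hS : ∑ i ∈ Finset.univ.filter (fun i => |hA.eigenvalues i| = (k:ℝ)),
        hA.eigenvalues i ^ (2*l) ≤ 2*(k:ℝ)^(2*l) := by
      have heach : ∀ i ∈ Finset.univ.filter (fun i => |hA.eigenvalues i| = (k:ℝ)),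
          hA.eigenvalues i ^ (2*l) = (k:ℝ)^(2*l) := by
        intro i hi
        rw [← (even_two_mul l).pow_abs, (Finset.mem_filter.1 hi).2]
      rw [Finset.sum_congr rfl heach, Finset.sum_const, nsmul_eq_mul]
      have hcard := card_eigs hconn hreg hA
      have : ((Finset.univ.filter (fun i => |hA.eigenvalues i| = (k:ℝ))).card : ℝ) ≤ 2 := by
        exact_mod_cast hcard
      have hknn : (0:ℝ) ≤ (k:ℝ)^(2*l) := by positivity
      nlinarith
    have hT : ∑ i ∈ Finset.univ.filter (fun i => ¬ |hA.eigenvalues i| = (k:ℝ)),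
        hA.eigenvalues i ^ (2*l) ≤ (Fintype.card V : ℝ) * lam^(2*l) := by
      have heach : ∀ i ∈ Finset.univ.filter (fun i => ¬ |hA.eigenvalues i| = (k:ℝ)),
          hA.eigenvalues i ^ (2*l) ≤ lam^(2*l) := by
        intro i hi
        have hne := (Finset.mem_filter.1 hi).2
        have hmem : |hA.eigenvalues i| ∈
            ((fun x : ℝ => |x|) '' {x : ℝ | x ∈ spectrum ℝ (G.adjMatrix ℝ) ∧ |x| ≠ (k : ℝ)}) :=
          ⟨hA.eigenvalues i, ⟨hA.eigenvalues_mem_spectrum_real i, hne⟩, rfl⟩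
        have hle := hlam.2 hmem
        calc hA.eigenvalues i ^ (2*l) = |hA.eigenvalues i| ^ (2*l) :=
              ((even_two_mul l).pow_abs _).symm
          _ ≤ lam^(2*l) := pow_le_pow_left₀ (abs_nonneg _) hle _
      calc ∑ i ∈ Finset.univ.filter (fun i => ¬ |hA.eigenvalues i| = (k:ℝ)),
            hA.eigenvalues i ^ (2*l)
          ≤ ∑ _i ∈ Finset.univ.filter (fun i => ¬ |hA.eigenvalues i| = (k:ℝ)), lam^(2*l) :=
            Finset.sum_le_sum heach
        _ = ((Finset.univ.filter (fun i => ¬ |hA.eigenvalues i| = (k:ℝ))).card : ℝ) * lam^(2*l) := by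
            rw [Finset.sum_const, nsmul_eq_mul]
        _ ≤ (Fintype.card V : ℝ) * lam^(2*l) := by
            have h5 : ((Finset.univ.filter (fun i => ¬ |hA.eigenvalues i| = (k:ℝ))).card : ℝ)
                ≤ (Fintype.card V : ℝ) := by
              exact_mod_cast Finset.card_le_card (Finset.filter_subset _ _)
            have : (0:ℝ) ≤ lam^(2*l) := by positivity
            nlinarith
    linarith
  calc (Fintype.card V : ℝ) * ((catalan l : ℝ) * ((k:ℝ)-1)^l) ≤ _ := h1
    _ ≤ _ := h2

lemma lam_le_k (hreg : G.IsRegularOfDegree k) {lam : ℝ}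
    (hlam : IsGreatest
      ((fun x : ℝ => |x|) '' {x : ℝ | x ∈ spectrum ℝ (G.adjMatrix ℝ) ∧ |x| ≠ (k : ℝ)})
      lam) : lam ≤ (k:ℝ) := by
  obtain ⟨x, hx, rfl⟩ := hlam.1
  exact spec_abs_le hreg hx.1

end AB
end P3


open Filter

/-- **(Alon–Boppana.)** For a sequence of connected `k`-regular simple
graphs `G_m` (`k ≥ 3`) whose numbers of vertices `N_m` tend to infinity, if
`λ_{G_m}(A)` denotes the largest absolute value of an adjacency eigenvalue of `G_m`
distinct from `± k`, then `liminf_m λ_{G_m}(A) ≥ 2√(k-1)`. -/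
theorem stmt15 (k : ℕ) (hk : 3 ≤ k) (Nm : ℕ → ℕ)
    (G : ∀ m, SimpleGraph (Fin (Nm m))) [∀ m, DecidableRel (G m).Adj]
    (hconn : ∀ m, (G m).Connected) (hreg : ∀ m, (G m).IsRegularOfDegree k)
    (hNm : Tendsto Nm atTop atTop)
    (lam : ℕ → ℝ)
    (hlam : ∀ m, IsGreatest
      ((fun x : ℝ => |x|) '' {x : ℝ | x ∈ spectrum ℝ ((G m).adjMatrix ℝ) ∧ |x| ≠ (k : ℝ)})
      (lam m)) :
    2 * Real.sqrt ((k : ℝ) - 1) ≤ liminf lam atTop := by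
  by_contra hcon
  push_neg at hcon
  have hk1 : (0:ℝ) < (k:ℝ) - 1 := by
    have : (3:ℝ) ≤ (k:ℝ) := by exact_mod_cast hk
    linarith
  have hK2pos : 0 < 2 * Real.sqrt ((k : ℝ) - 1) := by positivity
  have hm : max (liminf lam atTop) 0 < 2 * Real.sqrt ((k : ℝ) - 1) := max_lt hcon hK2pos
  obtain ⟨c, hc1, hc2⟩ := exists_between hm
  have hcpos : 0 < c := lt_of_le_of_lt (le_max_right _ 0) hc1
  have hlimc : liminf lam atTop < c := lt_of_le_of_lt (le_max_left _ _) hc1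
  have hb : IsCoboundedUnder (· ≥ ·) atTop lam :=
    isCoboundedUnder_ge_of_le atTop (fun m => AB.lam_le_k (hreg m) (hlam m))
  have hfreq : ∃ᶠ m in atTop, lam m < c := frequently_lt_of_liminf_lt hb hlimc
  have hcsq : c^2 < 4*((k:ℝ)-1) := by
    have h1 : c^2 < (2 * Real.sqrt ((k : ℝ) - 1))^2 := by
      apply pow_lt_pow_left₀ hc2 hcpos.le
      norm_num
    calc c^2 < (2 * Real.sqrt ((k : ℝ) - 1))^2 := h1
      _ = 4 * (Real.sqrt ((k:ℝ)-1))^2 := by ring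
      _ = 4 * ((k:ℝ)-1) := by rw [Real.sq_sqrt hk1.le]
  set r : ℝ := 4*((k:ℝ)-1) / c^2 with hrdef
  have hr1 : 1 < r := (one_lt_div (by positivity)).2 hcsq
  have hrtend : Tendsto (fun l : ℕ => (l:ℝ)^2 * (1/r)^l) atTop (nhds 0) :=
    tendsto_pow_const_mul_const_pow_of_lt_one 2 (by positivity)
      ((div_lt_one (by linarith)).2 (by linarith))
  have hev8 : ∀ᶠ l : ℕ in atTop, (l:ℝ)^2 * (1/r)^l < 1/8 :=
    hrtend.eventually (gt_mem_nhds (by norm_num))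
  obtain ⟨l0, hl0⟩ := hev8.exists_forall_of_atTop
  set l : ℕ := max l0 1 with hldef
  have hl1 : 1 ≤ l := le_max_right _ _
  have hlsmall : (l:ℝ)^2 * (1/r)^l < 1/8 := hl0 l (le_max_left _ _)
  have hrlpos : (0:ℝ) < r^l := by positivity
  have hgrow : 8 * (l:ℝ)^2 < r^l := by
    have h2 : (l:ℝ)^2 * (1/r)^l * r^l < (1/8) * r^l := by
      exact mul_lt_mul_of_pos_right hlsmall hrlpos
    have h3 : (1/r)^l * r^l = 1 := by
      rw [← mul_pow]
      field_simp
      exact one_pow l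
    rw [mul_assoc, h3, mul_one] at h2
    linarith
  -- catalan bound
  have hcatalan : (4:ℝ)^l ≤ 2*(l:ℝ)*((l:ℝ)+1)*(catalan l : ℝ) := by
    have h4 := Nat.four_pow_le_two_mul_self_mul_centralBinom l (by omega)
    rw [← succ_mul_catalan_eq_centralBinom] at h4
    have : (4^l : ℝ) ≤ ((2*l*((l+1)*catalan l) : ℕ) : ℝ) := by exact_mod_cast h4
    push_cast at this
    linarith
  have hcpow : (0:ℝ) < (c^2)^l := by positivity
  have hT : 2*(c^2)^l < (catalan l : ℝ) * ((k:ℝ)-1)^l := by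
    have e1 : (c^2)^l * r^l = 4^l * ((k:ℝ)-1)^l := by
      rw [hrdef, div_pow, mul_pow]
      field_simp
    have hll : (0:ℝ) < 2*(l:ℝ)*((l:ℝ)+1) := by
      have : (1:ℝ) ≤ (l:ℝ) := by exact_mod_cast hl1
      nlinarith
    have e2 : 2*(c^2)^l * (2*(l:ℝ)*((l:ℝ)+1)) < (c^2)^l * r^l := by
      have h5 : 2*(2*(l:ℝ)*((l:ℝ)+1)) ≤ 8*(l:ℝ)^2 := by
        have : (1:ℝ) ≤ (l:ℝ) := by exact_mod_cast hl1
        nlinarith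
      calc 2*(c^2)^l * (2*(l:ℝ)*((l:ℝ)+1)) = (c^2)^l * (2*(2*(l:ℝ)*((l:ℝ)+1))) := by ring
        _ ≤ (c^2)^l * (8*(l:ℝ)^2) := by
            exact mul_le_mul_of_nonneg_left h5 hcpow.le
        _ < (c^2)^l * r^l := by
            exact mul_lt_mul_of_pos_left hgrow hcpow
    have e3 : 4^l * ((k:ℝ)-1)^l ≤ (2*(l:ℝ)*((l:ℝ)+1)*(catalan l : ℝ)) * ((k:ℝ)-1)^l := by
      apply mul_le_mul_of_nonneg_right hcatalan (by positivity)
    rw [e1] at e2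
    have e3' : 4^l * ((k:ℝ)-1)^l ≤ (2*(l:ℝ)*((l:ℝ)+1)) * ((catalan l : ℝ) * ((k:ℝ)-1)^l) := by
      calc 4^l * ((k:ℝ)-1)^l ≤ (2*(l:ℝ)*((l:ℝ)+1)*(catalan l : ℝ)) * ((k:ℝ)-1)^l := e3
        _ = (2*(l:ℝ)*((l:ℝ)+1)) * ((catalan l : ℝ) * ((k:ℝ)-1)^l) := by ring
    have e4 : 2*(c^2)^l * (2*(l:ℝ)*((l:ℝ)+1)) <
        (2*(l:ℝ)*((l:ℝ)+1)) * ((catalan l : ℝ) * ((k:ℝ)-1)^l) := e2.trans_le e3'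
    have e5 : (2*(l:ℝ)*((l:ℝ)+1)) * (2*(c^2)^l) <
        (2*(l:ℝ)*((l:ℝ)+1)) * ((catalan l : ℝ) * ((k:ℝ)-1)^l) := by
      calc (2*(l:ℝ)*((l:ℝ)+1)) * (2*(c^2)^l) = 2*(c^2)^l * (2*(l:ℝ)*((l:ℝ)+1)) := by ring
        _ < _ := e4
    exact (mul_lt_mul_iff_right₀ hll).1 e5
  -- eventual lower bound on lam
  set T : ℝ := (catalan l : ℝ) * ((k:ℝ)-1)^l with hTdef
  have hTc : 0 < T - c^(2*l) := by
    have : c^(2*l) = (c^2)^l := by rw [← pow_mul]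
    rw [this]; linarith
  set M0 : ℕ := ⌈2*(k:ℝ)^(2*l) / (T - c^(2*l))⌉₊ + 1 with hM0
  have hev : ∀ᶠ m in atTop, c < lam m := by
    filter_upwards [hNm.eventually_ge_atTop M0] with m hNmm
    by_contra hle
    push_neg at hle
    have hlam0 : 0 ≤ lam m := by
      obtain ⟨x, -, hxeq⟩ := (hlam m).1
      rw [← hxeq]; exact abs_nonneg x
    have hpowle : lam m ^(2*l) ≤ c^(2*l) := pow_le_pow_left₀ hlam0 hle _
    have hkey := AB.key_bound hk (hconn m) (hreg m) (hlam m) l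
    rw [Fintype.card_fin] at hkey
    have hNbig : 2*(k:ℝ)^(2*l) / (T - c^(2*l)) < (Nm m : ℝ) := by
      have h6 : (M0 : ℝ) ≤ (Nm m : ℝ) := by exact_mod_cast hNmm
      have h7 : 2*(k:ℝ)^(2*l) / (T - c^(2*l)) ≤ (⌈2*(k:ℝ)^(2*l) / (T - c^(2*l))⌉₊ : ℝ) :=
        Nat.le_ceil _
      have h8 : ((⌈2*(k:ℝ)^(2*l) / (T - c^(2*l))⌉₊ : ℕ) : ℝ) + 1 ≤ (M0 : ℝ) := by
        rw [hM0]; push_cast; linarith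
      linarith
    have h9 : 2*(k:ℝ)^(2*l) < (Nm m : ℝ) * (T - c^(2*l)) := by
      rw [div_lt_iff₀ hTc] at hNbig
      linarith
    have h10 : (Nm m : ℝ) * (T - lam m ^(2*l)) ≤ 2*(k:ℝ)^(2*l) := by
      have := hkey
      rw [← hTdef] at this
      nlinarith [this]
    have h11 : (Nm m : ℝ) * (T - c^(2*l)) ≤ (Nm m : ℝ) * (T - lam m ^(2*l)) := by
      apply mul_le_mul_of_nonneg_left _ (Nat.cast_nonneg _)
      linarith
    linarith
  obtain ⟨m, hm1, hm2⟩ := (hfreq.and_eventually hev).exists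
  linarith
end
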